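/- arXiv:1012.4737 — 5 statements merged into one kernel-verified Lean document; each statement's English description precedes it below -/
import Mathlib

section
/- Let β ≤ α be nonzero ordinals, X a nonempty set, and τ a nonempty family of subsets of X. Then (X, τ) is [β, α]-compact if and only if (X, τ) is [γ, γ]-compact for every ordinal γ with β ≤ γ ≤ α. -/
open Ordinal Set Cardinal

/-- The order type of a set of ordinals, under the induced order: the unique ordinal `o`
such that `S` with the induced order is order-isomorphic to `Set.Iio o`. -/
noncomputable def otype (S : Set Ordinal) : Ordinal :=
  sInf {o : Ordinal | Nonempty (S ≃o Set.Iio o)}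

/-- `(X, τ)` is `[β, α]`-compact: every `α`-indexed cover of `X` by members of `τ`
has a subcover indexed by a subset of `α` of order type `< β`. -/
def OrdCompact (β α : Ordinal) (X : Type*) (τ : Set (Set X)) : Prop :=
  ∀ O : Ordinal → Set X,
    (∀ δ < α, O δ ∈ τ) →
    (⋃ δ ∈ Set.Iio α, O δ) = Set.univ →
    ∃ H ⊆ Set.Iio α, otype H < β ∧ (⋃ δ ∈ H, O δ) = Set.univ

universe u

lemma type_subtype_Iio (o : Ordinal.{u}) :
    Ordinal.type ((· < ·) : ↥(Set.Iio o) → ↥(Set.Iio o) → Prop) = Ordinal.lift.{u+1, u} o := by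
  rw [← typein_ordinal]
  rfl

lemma otype_iso_unique {S : Set Ordinal.{u}} {o o' : Ordinal.{u}}
    (e : ↥S ≃o ↥(Set.Iio o)) (e' : ↥S ≃o ↥(Set.Iio o')) : o = o' := by
  have h := Ordinal.type_eq.2 ⟨(e.symm.trans e').toRelIsoLT⟩
  rw [type_subtype_Iio, type_subtype_Iio] at h
  exact Ordinal.lift_inj.1 h

lemma otype_eq_of_iso {S : Set Ordinal.{u}} {o : Ordinal.{u}} (e : ↥S ≃o ↥(Set.Iio o)) :
    otype.{u,u} S = o := by
  have hne : {o' : Ordinal | Nonempty (S ≃o Set.Iio o')}.Nonempty := ⟨o, ⟨e⟩⟩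
  obtain ⟨e'⟩ := csInf_mem hne
  exact otype_iso_unique e' e

lemma otype_iso {S : Set Ordinal.{u}} {a : Ordinal.{u}} (h : S ⊆ Set.Iio a) :
    Nonempty (↥S ≃o ↥(Set.Iio (otype.{u,u} S))) := by
  have incl : ↥S ↪o ↥(Set.Iio a) :=
    ⟨⟨Set.inclusion h, Set.inclusion_injective h⟩, Iff.rfl⟩
  have hle : Ordinal.type ((· < ·) : ↥S → ↥S → Prop)
      ≤ Ordinal.type ((· < ·) : ↥(Set.Iio a) → ↥(Set.Iio a) → Prop) :=
    Ordinal.type_le_iff'.2 ⟨incl.ltEmbedding⟩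
  rw [type_subtype_Iio] at hle
  obtain ⟨o, ho⟩ := Ordinal.mem_range_lift_of_le hle
  have heq : Ordinal.type ((· < ·) : ↥S → ↥S → Prop)
      = Ordinal.type ((· < ·) : ↥(Set.Iio o) → ↥(Set.Iio o) → Prop) := by
    rw [type_subtype_Iio, ho]
  obtain ⟨e⟩ := Ordinal.type_eq.1 heq.symm
  have e' := OrderIso.ofRelIsoLT e
  rw [otype_eq_of_iso e'.symm]
  exact ⟨e'.symm⟩

lemma lift_otype {S : Set Ordinal.{u}} {a : Ordinal.{u}} (h : S ⊆ Set.Iio a) :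
    Ordinal.lift.{u+1, u} (otype.{u,u} S) = Ordinal.type ((· < ·) : ↥S → ↥S → Prop) := by
  obtain ⟨e⟩ := otype_iso h
  rw [← type_subtype_Iio]
  exact (Ordinal.type_eq.2 ⟨e.toRelIsoLT⟩).symm

lemma otype_le_of_emb {A B : Set Ordinal.{u}} {a b : Ordinal.{u}}
    (hA : A ⊆ Set.Iio a) (hB : B ⊆ Set.Iio b) (f : ↥A ↪o ↥B) : otype.{u,u} A ≤ otype.{u,u} B := by
  have hle : Ordinal.type ((· < ·) : ↥A → ↥A → Prop)
      ≤ Ordinal.type ((· < ·) : ↥B → ↥B → Prop) :=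
    Ordinal.type_le_iff'.2 ⟨f.ltEmbedding⟩
  rw [← lift_otype hA, ← lift_otype hB] at hle
  exact Ordinal.lift_le.{u+1,u}.1 hle

lemma otype_mono {A B : Set Ordinal.{u}} {b : Ordinal.{u}} (hB : B ⊆ Set.Iio b)
    (h : A ⊆ B) : otype.{u,u} A ≤ otype.{u,u} B :=
  otype_le_of_emb (h.trans hB) hB ⟨⟨Set.inclusion h, Set.inclusion_injective h⟩, Iff.rfl⟩

lemma otype_Iio (a : Ordinal.{u}) : otype.{u,u} (Set.Iio a) = a :=
  otype_eq_of_iso (OrderIso.refl _)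

lemma add_one_le_otype_insert {A : Set Ordinal.{u}} {c a : Ordinal.{u}}
    (hbound : insert c A ⊆ Set.Iio a) (hc : ∀ x ∈ A, x < c) :
    otype.{u,u} A + 1 ≤ otype.{u,u} (insert c A) := by
  have hA : A ⊆ Set.Iio a := (Set.subset_insert c A).trans hbound
  refine Ordinal.lift_le.{u+1,u}.1 ?_
  rw [Ordinal.lift_add, Ordinal.lift_one, lift_otype hA,
    lift_otype hbound, ← Ordinal.type_pUnit.{u+1}, ← Ordinal.type_sum_lex]
  refine Ordinal.type_le_iff'.2 ⟨⟨⟨fun x => Sum.rec (fun p => ⟨p.1, Set.mem_insert_of_mem _ p.2⟩)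
    (fun _ => ⟨c, Set.mem_insert _ _⟩) x, ?_⟩, ?_⟩⟩
  · rintro (p | u) (q | v) h <;> simp only [Subtype.mk.injEq] at h
    · exact congrArg Sum.inl (Subtype.ext h)
    · exact absurd h (ne_of_lt (hc _ p.2))
    · exact absurd h.symm (ne_of_lt (hc _ q.2))
    · rfl
  · rintro (p | u) (q | v)
    · exact ⟨fun h => Sum.Lex.inl h, fun h => (Sum.lex_inl_inl.1 h : p < q)⟩
    · exact iff_of_true (Subtype.mk_lt_mk.2 (hc _ p.2)) (Sum.Lex.sep _ _)
    · exact iff_of_false (fun h => (hc _ q.2).asymm (Subtype.mk_lt_mk.1 h)) Sum.lex_inr_inl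
    · exact iff_of_false (lt_irrefl _) (fun h => (Sum.lex_inr_inr.1 h).elim)

lemma otype_insert_bot_le {A : Set Ordinal.{u}} {b a : Ordinal.{u}}
    (hbound : insert b A ⊆ Set.Iio a) (hb : ∀ x ∈ A, b < x) :
    otype.{u,u} (insert b A) ≤ 1 + otype.{u,u} A := by
  have hA : A ⊆ Set.Iio a := (Set.subset_insert b A).trans hbound
  refine Ordinal.lift_le.{u+1,u}.1 ?_
  rw [Ordinal.lift_add, Ordinal.lift_one, lift_otype hA,
    lift_otype hbound, ← Ordinal.type_pUnit.{u+1}, ← Ordinal.type_sum_lex]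
  refine Ordinal.type_le_iff'.2 ⟨⟨⟨fun x =>
    if h : x.1 = b then Sum.inl PUnit.unit else Sum.inr ⟨x.1, x.2.resolve_left h⟩, ?_⟩, ?_⟩⟩
  · rintro ⟨x, hx⟩ ⟨y, hy⟩ h
    by_cases h1 : x = b <;> by_cases h2 : y = b
    · exact Subtype.ext (h1.trans h2.symm)
    · simp only [dif_pos h1, dif_neg h2] at h; exact absurd h (by simp)
    · simp only [dif_neg h1, dif_pos h2] at h; exact absurd h (by simp)
    · simp only [dif_neg h1, dif_neg h2, Sum.inr.injEq, Subtype.mk.injEq] at h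
      exact Subtype.ext h
  · rintro ⟨x, hx⟩ ⟨y, hy⟩
    change Sum.Lex _ _ (if h : x = b then _ else _) (if h : y = b then _ else _) ↔ _
    by_cases h1 : x = b <;> by_cases h2 : y = b
    · rw [dif_pos h1, dif_pos h2]
      exact iff_of_false (fun h => (Sum.lex_inl_inl.1 h).elim)
        (fun h => absurd (Subtype.mk_lt_mk.1 h) (h1 ▸ h2 ▸ lt_irrefl b))
    · rw [dif_pos h1, dif_neg h2]
      exact iff_of_true (Sum.Lex.sep _ _)
        (Subtype.mk_lt_mk.2 (h1 ▸ hb _ (hy.resolve_left h2)))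
    · rw [dif_neg h1, dif_pos h2]
      exact iff_of_false Sum.lex_inr_inl
        (fun h => (hb _ (hx.resolve_left h1)).asymm (h2 ▸ Subtype.mk_lt_mk.1 h))
    · rw [dif_neg h1, dif_neg h2]
      simp [Sum.lex_inr_inr, Subtype.mk_lt_mk]

lemma one_add_le_add_one (t : Ordinal) : 1 + t ≤ t + 1 := by
  rcases lt_or_ge t Ordinal.omega0 with h | h
  · obtain ⟨n, rfl⟩ := Ordinal.lt_omega0.1 h
    norm_cast
    omega
  · rw [Ordinal.one_add_of_omega0_le h]
    exact le_self_add

lemma otype_image {γ b : Ordinal.{u}} {H : Set Ordinal.{u}} (hHb : H ⊆ Set.Iio b)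
    (e : ↥(Set.Iio γ) ≃o ↥H) (H₁ : Set Ordinal.{u}) (hs : H₁ ⊆ Set.Iio γ) :
    otype.{u,u} ((fun p : ↥(Set.Iio γ) => (e p : Ordinal)) '' {p | ↑p ∈ H₁}) = otype.{u,u} H₁ := by
  set T := (fun p : ↥(Set.Iio γ) => (e p : Ordinal)) '' {p | ↑p ∈ H₁} with hT
  have hTH : T ⊆ H := by rintro x ⟨p, _, rfl⟩; exact (e p).2
  apply le_antisymm
  · refine otype_le_of_emb (hTH.trans hHb) hs (OrderEmbedding.ofStrictMono (fun y =>
      ⟨(e.symm ⟨y.1, hTH y.2⟩ : ↥(Set.Iio γ)).1, ?_⟩) ?_)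
    · obtain ⟨p, hp, hpe⟩ := y.2
      have hpy : e.symm ⟨y.1, hTH y.2⟩ = p := by
        apply e.symm_apply_eq.2; exact Subtype.ext hpe.symm
      rw [hpy]; exact hp
    · intro y z hyz
      have h1 : (⟨y.1, hTH y.2⟩ : ↥H) < ⟨z.1, hTH z.2⟩ := hyz
      exact e.symm.strictMono h1
  · refine otype_le_of_emb hs (hTH.trans hHb) (OrderEmbedding.ofStrictMono (fun x =>
      ⟨(e ⟨x.1, hs x.2⟩ : Ordinal), ⟨⟨x.1, hs x.2⟩, x.2, rfl⟩⟩) ?_)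
    intro x z hxz
    have h1 : (⟨x.1, hs x.2⟩ : ↥(Set.Iio γ)) < ⟨z.1, hs z.2⟩ := hxz
    exact e.strictMono h1

/-- Proposition 2.3(2): for nonzero ordinals `β ≤ α`, `(X, τ)` is `[β, α]`-compact iff it is
`[γ, γ]`-compact for every `γ` with `β ≤ γ ≤ α`. -/
theorem ordCompact_iff_forall_between {β α : Ordinal} (hβ : β ≠ 0) (hα : α ≠ 0)
    (hβα : β ≤ α) {X : Type*} (hX : Nonempty X) {τ : Set (Set X)} (hτ : τ.Nonempty) :
    OrdCompact β α X τ ↔ ∀ γ : Ordinal, β ≤ γ → γ ≤ α → OrdCompact γ γ X τ := by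
  constructor
  · intro hC γ hβγ hγα O hO hcov
    have hγ0 : (0 : Ordinal) < γ := lt_of_lt_of_le (pos_iff_ne_zero.2 hβ) hβγ
    set O' : Ordinal → Set X := fun δ => if δ < γ then O δ else O 0 with hO'def
    have hO'mem : ∀ δ < α, O' δ ∈ τ := by
      intro δ _
      simp only [O']
      split
      · exact hO δ ‹_›
      · exact hO 0 hγ0
    have hcov' : (⋃ δ ∈ Set.Iio α, O' δ) = Set.univ := by
      rw [Set.eq_univ_iff_forall]
      intro x
      have hx : x ∈ ⋃ δ ∈ Set.Iio γ, O δ := hcov ▸ Set.mem_univ x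
      obtain ⟨δ, hδ, hxδ⟩ := Set.mem_iUnion₂.1 hx
      exact Set.mem_iUnion₂.2 ⟨δ, lt_of_lt_of_le hδ hγα, by
        simpa only [O', if_pos (show δ < γ from hδ)] using hxδ⟩
    obtain ⟨H, hHα, hHot, hHcov⟩ := hC O' hO'mem hcov'
    by_cases hsub : H ⊆ Set.Iio γ
    · refine ⟨H, hsub, lt_of_lt_of_le hHot hβγ, ?_⟩
      rw [Set.eq_univ_iff_forall]
      intro x
      obtain ⟨δ, hδ, hxδ⟩ := Set.mem_iUnion₂.1 (hHcov ▸ Set.mem_univ x)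
      exact Set.mem_iUnion₂.2 ⟨δ, hδ, by
        simpa only [O', if_pos (show δ < γ from hsub hδ)] using hxδ⟩
    · obtain ⟨c, hcH, hcγ⟩ := Set.not_subset.1 hsub
      have hγc : γ ≤ c := not_lt.1 hcγ
      set A := H ∩ Set.Iio γ with hAdef
      have hAγ : A ⊆ Set.Iio γ := Set.inter_subset_right
      have hAH : A ⊆ H := Set.inter_subset_left
      have hcovA : (⋃ δ ∈ insert (0:Ordinal) A, O δ) = Set.univ := by
        rw [Set.eq_univ_iff_forall]
        intro x
        obtain ⟨δ, hδ, hxδ⟩ := Set.mem_iUnion₂.1 (hHcov ▸ Set.mem_univ x)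
        by_cases h : δ < γ
        · exact Set.mem_iUnion₂.2 ⟨δ, Set.mem_insert_of_mem _ ⟨hδ, h⟩, by
            simpa only [O', if_pos h] using hxδ⟩
        · exact Set.mem_iUnion₂.2 ⟨0, Set.mem_insert _ _, by
            simpa only [O', if_neg h] using hxδ⟩
      have hHb : H ⊆ Set.Iio α := hHα
      have hAltH : otype A + 1 ≤ otype H := by
        have h1 : otype A + 1 ≤ otype (insert c A) :=
          add_one_le_otype_insert (Set.insert_subset (hHb hcH) (hAH.trans hHb))
            (fun x hx => lt_of_lt_of_le (hAγ hx) hγc)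
        exact h1.trans (otype_mono hHb (Set.insert_subset hcH hAH))
      by_cases h0 : (0 : Ordinal) ∈ A
      · refine ⟨A, hAγ, ?_, by rwa [Set.insert_eq_of_mem h0] at hcovA⟩
        exact lt_of_le_of_lt (otype_mono hHb hAH) (lt_of_lt_of_le hHot hβγ)
      · refine ⟨insert 0 A, Set.insert_subset hγ0 hAγ, ?_, hcovA⟩
        have hbot : ∀ x ∈ A, (0 : Ordinal) < x := fun x hx =>
          pos_iff_ne_zero.2 (fun h => h0 (h ▸ hx))
        calc otype (insert (0:Ordinal) A)
            ≤ 1 + otype A := otype_insert_bot_le (Set.insert_subset hγ0 hAγ) hbot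
          _ ≤ otype A + 1 := one_add_le_add_one _
          _ ≤ otype H := hAltH
          _ < β := hHot
          _ ≤ γ := hβγ
  · intro h
    have key : ∀ α' : Ordinal, α' ≤ α → ∀ O : Ordinal → Set X, (∀ δ < α', O δ ∈ τ) →
        (⋃ δ ∈ Set.Iio α', O δ) = Set.univ →
        ∃ H ⊆ Set.Iio α', otype H < β ∧ (⋃ δ ∈ H, O δ) = Set.univ := by
      intro α'
      induction α' using Ordinal.induction with
      | _ α' IH =>
      intro hα'α O hO hcov
      rcases lt_or_ge α' β with hlt | hge
      · exact ⟨Set.Iio α', subset_rfl, by rwa [otype_Iio], hcov⟩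
      · obtain ⟨H, hHsub, hHlt, hHcov⟩ := h α' hge hα'α O hO hcov
        obtain ⟨e0⟩ := otype_iso hHsub
        set γ₀ := otype H with hγ₀def
        let e : ↥(Set.Iio γ₀) ≃o ↥H := e0.symm
        set O' : Ordinal → Set X := fun δ =>
          if hδ : δ < γ₀ then O (e ⟨δ, hδ⟩) else ∅ with hO'def
        have hO'mem : ∀ δ < γ₀, O' δ ∈ τ := by
          intro δ hδ
          simp only [O', dif_pos hδ]
          exact hO _ (hHsub (e ⟨δ, hδ⟩).2)
        have hcov' : (⋃ δ ∈ Set.Iio γ₀, O' δ) = Set.univ := by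
          rw [Set.eq_univ_iff_forall]
          intro x
          obtain ⟨δ, hδ, hxδ⟩ := Set.mem_iUnion₂.1 (hHcov ▸ Set.mem_univ x)
          refine Set.mem_iUnion₂.2 ⟨(e0 ⟨δ, hδ⟩ : Ordinal), (e0 ⟨δ, hδ⟩).2, ?_⟩
          have he : e ⟨(e0 ⟨δ, hδ⟩ : Ordinal), (e0 ⟨δ, hδ⟩).2⟩ = ⟨δ, hδ⟩ := by
            simp only [e]
            rw [show (⟨(e0 ⟨δ, hδ⟩ : Ordinal), (e0 ⟨δ, hδ⟩).2⟩ : ↥(Set.Iio γ₀)) = e0 ⟨δ, hδ⟩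
              from rfl]
            exact e0.symm_apply_apply _
          have hlt' : (e0 ⟨δ, hδ⟩ : Ordinal) < γ₀ := (e0 ⟨δ, hδ⟩).2
          simp only [O', dif_pos hlt', he]
          exact hxδ
        obtain ⟨H₁, hH₁sub, hH₁lt, hH₁cov⟩ :=
          IH γ₀ hHlt (le_of_lt (lt_of_lt_of_le hHlt hα'α)) O' hO'mem hcov'
        refine ⟨(fun p : ↥(Set.Iio γ₀) => (e p : Ordinal)) '' {p | ↑p ∈ H₁}, ?_, ?_, ?_⟩
        · rintro x ⟨p, _, rfl⟩
          exact hHsub (e p).2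
        · rw [otype_image hHsub e H₁ hH₁sub]
          exact hH₁lt
        · rw [Set.eq_univ_iff_forall]
          intro x
          obtain ⟨δ, hδ, hxδ⟩ := Set.mem_iUnion₂.1 (hH₁cov ▸ Set.mem_univ x)
          have hδγ : δ < γ₀ := hH₁sub hδ
          refine Set.mem_iUnion₂.2 ⟨(e ⟨δ, hδγ⟩ : Ordinal), ⟨⟨δ, hδγ⟩, hδ, rfl⟩, ?_⟩
          simpa only [O', dif_pos hδγ] using hxδ
    exact key α le_rfl
end

section
/- Let γ and α be ordinals such that either γ or α is infinite and γ + α is nonzero, X a nonempty set, and τ a nonempty family of subsets of X. If (X, τ) is [γ + α, γ + α]-compact, then (X, τ) is [γ + α + α, γ + α + α]-compact (and hence [γ + α·n, γ + α·n]-compact for every n < ω). -/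
open Ordinal Set Cardinal

universe u

theorem Ordinal.le_add_right (a b : Ordinal) : a ≤ a + b := le_self_add

theorem Ordinal.le_add_left (a b : Ordinal) : a ≤ b + a := le_add_self

noncomputable def OT (S : Set Ordinal.{u}) : Ordinal.{u+1} :=
  Ordinal.type (Subrel ((· < ·) : Ordinal.{u} → Ordinal.{u} → Prop) (· ∈ S))

theorem OT_Iio (a : Ordinal.{u}) : OT (Set.Iio a) = Ordinal.lift.{u+1} a := by
  rw [OT]
  exact (type_subrel _ _).trans (typein_ordinal a)

theorem OT_mono {S T : Set Ordinal.{u}} (h : S ⊆ T) : OT S ≤ OT T := by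
  rw [OT, OT, type_le_iff']
  refine ⟨⟨⟨fun x => ⟨x.1, h x.2⟩, ?_⟩, Iff.rfl⟩⟩
  intro a b hab
  exact Subtype.ext (Subtype.mk_eq_mk.mp hab)

theorem OT_eq_of_iso {S T : Set Ordinal.{u}} (e : S ≃o T) : OT S = OT T := by
  rw [OT, OT, type_eq]
  exact ⟨e.toRelIsoLT⟩

noncomputable def isoOfOTEq {S T : Set Ordinal.{u}} (h : OT S = OT T) : S ≃o T := by
  rw [OT, OT, type_eq] at h
  exact OrderIso.ofRelIsoLT (Classical.choice h)

theorem OT_image {S : Set Ordinal.{u}} {f : Ordinal.{u} → Ordinal.{u}}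
    (h : ∀ x ∈ S, ∀ y ∈ S, x < y → f x < f y) : OT (f '' S) = OT S := by
  refine (OT_eq_of_iso ?_).symm
  have hinj : ∀ x : S, ∀ y : S, f x.1 < f y.1 ↔ (x : Ordinal) < y := by
    intro x y
    constructor
    · intro hf
      rcases lt_trichotomy (x : Ordinal) y with h1 | h1 | h1
      · exact h1
      · exact absurd hf (by rw [h1]; exact lt_irrefl _)
      · exact absurd hf (asymm (h _ y.2 _ x.2 h1))
    · exact h _ x.2 _ y.2
  refine ⟨Equiv.ofBijective (fun x => ⟨f x.1, mem_image_of_mem f x.2⟩) ⟨?_, ?_⟩, ?_⟩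
  · intro x y hxy
    have hfv : f x.1 = f y.1 := Subtype.mk_eq_mk.mp hxy
    rcases lt_trichotomy (x : Ordinal) y with h1 | h1 | h1
    · exact absurd (hfv ▸ h _ x.2 _ y.2 h1) (lt_irrefl _)
    · exact Subtype.ext h1
    · exact absurd (hfv ▸ h _ y.2 _ x.2 h1) (lt_irrefl _)
  · rintro ⟨y, x, hx, rfl⟩
    exact ⟨⟨x, hx⟩, rfl⟩
  · intro x y
    show (⟨f x.1, _⟩ : ↥(f '' S)) ≤ ⟨f y.1, _⟩ ↔ x ≤ y
    rw [Subtype.mk_le_mk, ← Subtype.coe_le_coe, le_iff_le_iff_lt_iff_lt]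
    exact hinj y x

theorem OT_union_stacked {S T : Set Ordinal.{u}} (h : ∀ s ∈ S, ∀ t ∈ T, s < t) :
    OT (S ∪ T) = OT S + OT T := by
  classical
  rw [OT, OT, OT, ← type_sum_lex, type_eq]
  have hdisj : ∀ x : Ordinal, x ∈ S → x ∈ T → False := fun x hS hT => lt_irrefl x (h x hS x hT)
  refine ⟨⟨⟨?_, ?_, ?_, ?_⟩, ?_⟩⟩
  · exact fun x => if hx : x.1 ∈ S then Sum.inl ⟨x.1, hx⟩ else
      Sum.inr ⟨x.1, x.2.resolve_left hx⟩
  · exact Sum.elim (fun s => ⟨s.1, Or.inl s.2⟩) (fun t => ⟨t.1, Or.inr t.2⟩)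
  · rintro ⟨x, hx | hx⟩
    · simp [dif_pos hx]
    · have : x ∉ S := fun hS => hdisj x hS hx
      simp [dif_neg this]
  · rintro (⟨x, hx⟩ | ⟨x, hx⟩)
    · exact dif_pos hx
    · have : x ∉ S := fun hS => hdisj x hS hx
      exact dif_neg this
  · intro a b
    simp only [Equiv.coe_fn_mk]
    by_cases haS : a.1 ∈ S <;> by_cases hbS : b.1 ∈ S
    · rw [dif_pos haS, dif_pos hbS, Sum.lex_inl_inl]
      exact Iff.rfl
    · rw [dif_pos haS, dif_neg hbS]
      simp only [Sum.Lex.sep, true_iff]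
      exact h a.1 haS b.1 (b.2.resolve_left hbS)
    · rw [dif_neg haS, dif_pos hbS]
      constructor
      · intro hl
        cases hl
      · intro hab
        exact absurd (h b.1 hbS a.1 (a.2.resolve_left haS)) (asymm hab)
    · rw [dif_neg haS, dif_neg hbS, Sum.lex_inr_inr]
      exact Iff.rfl

theorem mem_otypeSet_iff {S : Set Ordinal.{u}} {o : Ordinal.{u}} :
    Nonempty (S ≃o Set.Iio o) ↔ OT S = Ordinal.lift.{u+1} o := by
  constructor
  · intro ⟨e⟩
    rw [OT_eq_of_iso e, OT_Iio]
  · intro hOT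
    exact ⟨isoOfOTEq (by rw [hOT, OT_Iio])⟩

theorem otype_eq_of_OT {S : Set Ordinal.{u}} {o : Ordinal.{u}} (h : OT S = Ordinal.lift.{u+1} o) :
    otype.{u,u} S = o := by
  have : {o' : Ordinal.{u} | Nonempty (S ≃o Set.Iio o')} = {o} := by
    ext o'
    simp only [Set.mem_setOf_eq, Set.mem_singleton_iff, mem_otypeSet_iff, h]
    exact ⟨fun h' => lift_inj.mp h'.symm, fun h' => by rw [h']⟩
  rw [otype, this, csInf_singleton]

/-- For `S` bounded, `OT S` is the lift of `otype.{u,u} S`. -/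
theorem OT_eq_lift {S : Set Ordinal.{u}} {a : Ordinal.{u}} (hS : S ⊆ Set.Iio a) :
    OT S = Ordinal.lift.{u+1} (otype.{u,u} S) := by
  have h1 : OT S ≤ Ordinal.lift.{u+1} a := by
    rw [← OT_Iio]
    exact OT_mono hS
  obtain ⟨o, ho⟩ := Ordinal.mem_range_lift_of_le h1
  rw [otype_eq_of_OT ho.symm, ho]

-- arithmetic helpers
theorem add_lt_add_right_of_lt_omega0 {x y c : Ordinal.{u}} (h : x < y) (hc : c < ω) :
    x + c < y + c := by
  obtain ⟨n, rfl⟩ := lt_omega0.mp hc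
  induction n with
  | zero => simpa using h
  | succ m ih =>
    have : ((m + 1 : ℕ) : Ordinal) = (m : Ordinal) + 1 := by push_cast; rfl
    rw [this, ← add_assoc, ← add_assoc]
    have := ih (by exact (nat_lt_omega0 m))
    rwa [add_one_eq_succ, add_one_eq_succ, Order.succ_lt_succ_iff]

theorem lt_of_add_lt_add_right' {u v c : Ordinal.{u}} (h : u + c < v + c) : u < v := by
  by_contra hle
  push_neg at hle
  exact absurd (add_le_add_left hle c) (not_le.mpr h)

theorem absorb_step {a g M : Ordinal.{u}} (hag : a ≤ g) (h : a + M < g + M) :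
    a + (M + M) < g + (M + M) := by
  obtain ⟨d, rfl⟩ : ∃ d, g = a + d := ⟨g - a, (Ordinal.add_sub_cancel_of_le hag).symm⟩
  rw [add_assoc] at h
  have hdM : M < d + M := by
    have := (add_lt_add_iff_left a).mp h
    exact this
  have hdo : M < d * ω := by
    by_contra hn
    push_neg at hn
    exact absurd (add_eq_right_iff_mul_omega0_le.mpr hn) (ne_of_gt hdM)
  have hMM : M + M < d * ω := by
    obtain ⟨c', hc', hMc'⟩ := (lt_mul_iff_of_isSuccLimit isSuccLimit_omega0).mp hdo
    obtain ⟨n, rfl⟩ := lt_omega0.mp hc'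
    have hd0 : d ≠ 0 := by
      rintro rfl
      simp at hdo
    calc M + M ≤ d * n + d * n := add_le_add hMc'.le hMc'.le
    _ = d * (n + n) := by rw [mul_add]
    _ < d * ω := by
      apply mul_lt_mul_of_pos_left _ (pos_iff_ne_zero.mpr hd0)
      rw [← Nat.cast_add]
      exact nat_lt_omega0 _
  have : M + M < d + (M + M) := by
    rcases lt_or_eq_of_le (Ordinal.le_add_left (M + M) d) with h' | h'
    · exact h'
    · exact absurd (add_eq_right_iff_mul_omega0_le.mp h'.symm) (not_le.mpr hMM)
  rw [add_assoc]
  exact (add_lt_add_iff_left a).mpr this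

theorem keyIneq {A b₀ b₁ c Γ M N b : Ordinal.{u}} (hN : N < ω) (hA : A ≤ Γ) (hb : b ≤ M)
    (h0 : b₀ ≤ b) (h1 : b₁ ≤ b) (hc : c ≤ N) (hyp : A + b + c < Γ + M + N) :
    A + b₀ + b₁ + c < Γ + M + M + N := by
  have lhs_eq : A + b₀ + b₁ + c = A + (b₀ + (b₁ + c)) := by
    rw [add_assoc, add_assoc]
  have rhs_eq : Γ + M + M + N = Γ + (M + (M + N)) := by
    rw [add_assoc, add_assoc]
  rcases lt_or_eq_of_le hb with hbM | hbeq
  · -- b < M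
    have e1 : b₁ + c < M + N :=
      (add_le_add h1 hc).trans_lt (add_lt_add_right_of_lt_omega0 hbM hN)
    have e2 : b₀ + (b₁ + c) < M + (M + N) :=
      lt_of_lt_of_le ((add_lt_add_iff_left b₀).mpr e1)
        (add_le_add_left (h0.trans hbM.le) _)
    rw [lhs_eq, rhs_eq]
    calc A + (b₀ + (b₁ + c)) < A + (M + (M + N)) := (add_lt_add_iff_left A).mpr e2
    _ ≤ Γ + (M + (M + N)) := add_le_add_left hA _
  · have hb0 : b₀ ≤ M := h0.trans (le_of_eq hbeq)
    have hb1 : b₁ ≤ M := h1.trans (le_of_eq hbeq)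
    rw [hbeq] at hyp
    rcases lt_or_eq_of_le hc with hcN | hceq
    · calc A + b₀ + b₁ + c ≤ Γ + M + M + c :=
            add_le_add (add_le_add (add_le_add hA hb0) hb1) le_rfl
      _ < Γ + M + M + N := (add_lt_add_iff_left _).mpr hcN
    · rw [hceq] at hyp ⊢
      have h2 : A + M < Γ + M := lt_of_add_lt_add_right' hyp
      have h3 : A + (M + M) < Γ + (M + M) := absorb_step hA h2
      calc A + b₀ + b₁ + N ≤ A + M + M + N :=
            add_le_add (add_le_add (add_le_add le_rfl hb0) hb1) le_rfl
      _ = A + (M + M) + N := by rw [add_assoc A M M]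
      _ < Γ + (M + M) + N := add_lt_add_right_of_lt_omega0 h3 hN
      _ = Γ + M + M + N := by rw [add_assoc Γ M M]

universe v

theorem transfer {β β' : Ordinal.{u}} {X : Type v} {τ : Set (Set X)} (g : Ordinal.{u} → Ordinal.{u})
    (hmap : ∀ δ < β, g δ < β')
    (hsurj : ∀ ε < β', ∃ δ, δ < β ∧ g δ = ε)
    (hot : ∀ H, H ⊆ Set.Iio β → OT H < Ordinal.lift.{u+1} β →
      OT (g '' H) < Ordinal.lift.{u+1} β')
    (h : OrdCompact β β X τ) : OrdCompact β' β' X τ := by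
  intro O hmem hcov
  have hcov' : (⋃ δ ∈ Set.Iio β, O (g δ)) = Set.univ := by
    rw [Set.eq_univ_iff_forall]
    intro x
    have hx : x ∈ ⋃ ε ∈ Set.Iio β', O ε := hcov.symm ▸ Set.mem_univ x
    obtain ⟨ε, hε, hxε⟩ := Set.mem_iUnion₂.mp hx
    obtain ⟨δ, hδ, rfl⟩ := hsurj ε hε
    exact Set.mem_biUnion hδ hxε
  obtain ⟨H, hH, hHlt, hHcov⟩ := h (fun δ => O (g δ)) (fun δ hδ => hmem _ (hmap δ hδ)) hcov'
  refine ⟨g '' H, ?_, ?_, ?_⟩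
  · rintro ε ⟨δ, hδ, rfl⟩
    exact hmap δ (hH hδ)
  · have h1 : OT H < Ordinal.lift.{u+1} β := by
      rw [OT_eq_lift hH]
      exact lift_lt.mpr hHlt
    have h2 := hot H hH h1
    have h3 : g '' H ⊆ Iio β' := by
      rintro ε ⟨δ, hδ, rfl⟩
      exact hmap δ (hH hδ)
    rw [OT_eq_lift h3] at h2
    exact lift_lt.mp h2
  · rw [Set.biUnion_image]
    exact hHcov

theorem lift_lt_omega0 {n : Ordinal.{u}} (hn : n < ω) : Ordinal.lift.{u+1} n < ω := by
  have h2 : Ordinal.lift.{u+1} n < Ordinal.lift.{u+1} ω := Ordinal.lift_lt.mpr hn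
  rwa [Ordinal.lift_omega0] at h2

theorem stepFin {γ n : Ordinal.{u}} (hγ : ω ≤ γ) (hn : n < ω) {X : Type v} {τ : Set (Set X)}
    (h : OrdCompact (γ + n) (γ + n) X τ) : OrdCompact (γ + n + n) (γ + n + n) X τ := by
  classical
  set g : Ordinal.{u} → Ordinal.{u} :=
    fun δ => if δ < n then γ + n + δ else if δ < ω then δ - n else δ with hg
  have hnγ : n ≤ γ := hn.le.trans hγ
  refine transfer g ?_ ?_ ?_ h
  · -- maps into Iio (γ+n+n)
    intro δ hδ
    by_cases h1 : δ < n
    · simp only [g, if_pos h1]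
      exact add_lt_add_right h1 _
    · by_cases h2 : δ < ω
      · simp only [g, if_neg h1, if_pos h2]
        calc δ - n ≤ δ := Ordinal.sub_le.mpr (Ordinal.le_add_left δ n)
        _ < ω := h2
        _ ≤ γ := hγ
        _ ≤ γ + n + n := (Ordinal.le_add_right γ n).trans (Ordinal.le_add_right _ n)
      · simp only [g, if_neg h1, if_neg h2]
        exact hδ.trans_le (Ordinal.le_add_right _ n)
  · -- surjective
    intro ε hε
    rcases lt_or_ge ε ω with h1 | h1
    · refine ⟨n + ε, ?_, ?_⟩
      · calc n + ε < ω := principal_add_omega0 hn h1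
        _ ≤ γ := hγ
        _ ≤ γ + n := Ordinal.le_add_right γ n
      · have hnn : ¬ n + ε < n := not_lt.mpr (Ordinal.le_add_right n ε)
        simp only [g, if_neg hnn, if_pos (principal_add_omega0 hn h1), Ordinal.add_sub_cancel]
    · rcases lt_or_ge ε (γ + n) with h2 | h2
      · refine ⟨ε, h2, ?_⟩
        have hh1 : ¬ ε < n := not_lt.mpr ((hn.le.trans h1))
        have hh2 : ¬ ε < ω := not_lt.mpr h1
        simp only [g, if_neg hh1, if_neg hh2]
      · refine ⟨ε - (γ + n), ?_, ?_⟩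
        · have : ε - (γ + n) < n := (Ordinal.sub_lt_of_le h2).mpr hε
          calc ε - (γ + n) < n := this
          _ ≤ γ := hnγ
          _ ≤ γ + n := Ordinal.le_add_right γ n
        · have hlt : ε - (γ + n) < n := (Ordinal.sub_lt_of_le h2).mpr hε
          simp only [g, if_pos hlt]
          exact Ordinal.add_sub_cancel_of_le h2
  · -- order types
    intro H hH hOTH
    set A : Set Ordinal.{u} := H ∩ Iio n with hA
    set D : Set Ordinal.{u} := H ∩ Ico n (γ + n) with hD
    have hsplit : H = A ∪ D := by
      ext x
      constructor
      · intro hx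
        rcases lt_or_ge x n with h1 | h1
        · exact Or.inl ⟨hx, h1⟩
        · exact Or.inr ⟨hx, h1, hH hx⟩
      · rintro (⟨hx, _⟩ | ⟨hx, _⟩) <;> exact hx
    have himg : g '' H = g '' D ∪ g '' A := by
      rw [hsplit, Set.image_union, Set.union_comm]
    -- g on A
    have hgA : g '' A = (fun δ => γ + n + δ) '' A := by
      apply Set.image_congr
      intro x hx
      simp only [g]
      rw [if_pos (show x < n from hx.2)]
    have hOTgA : OT (g '' A) = OT A := by
      rw [hgA]
      exact OT_image (fun x _ y _ hxy => add_lt_add_right hxy _)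
    have hgAloc : g '' A ⊆ Ico (γ + n) (γ + n + n) := by
      rw [hgA]
      rintro _ ⟨x, hx, rfl⟩
      exact ⟨Ordinal.le_add_right _ _, add_lt_add_right hx.2 _⟩
    -- g on D
    have hDn : ∀ x ∈ D, n ≤ x := fun x hx => hx.2.1
    have hgD : ∀ x ∈ D, g x = if x < ω then x - n else x := by
      intro x hx
      simp only [g, if_neg (not_lt.mpr (hDn x hx))]
    have hOTgD : OT (g '' D) = OT D := by
      apply OT_image
      intro x hx y hy hxy
      rw [hgD x hx, hgD y hy]
      by_cases h1 : x < ω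
      · by_cases h2 : y < ω
        · rw [if_pos h1, if_pos h2]
          have ex : n + (x - n) = x := Ordinal.add_sub_cancel_of_le (hDn x hx)
          have ey : n + (y - n) = y := Ordinal.add_sub_cancel_of_le (hDn y hy)
          have : n + (x - n) < n + (y - n) := by rw [ex, ey]; exact hxy
          exact (add_lt_add_iff_left n).mp this
        · rw [if_pos h1, if_neg h2]
          calc x - n ≤ x := Ordinal.sub_le.mpr (Ordinal.le_add_left x n)
          _ < ω := h1
          _ ≤ y := not_lt.mp h2
      · have h2 : ¬ y < ω := not_lt.mpr ((not_lt.mp h1).trans hxy.le)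
        rw [if_neg h1, if_neg h2]
        exact hxy
    have hgDloc : g '' D ⊆ Iio (γ + n) := by
      rintro _ ⟨x, hx, rfl⟩
      rw [hgD x hx]
      by_cases h1 : x < ω
      · rw [if_pos h1]
        calc x - n ≤ x := Ordinal.sub_le.mpr (Ordinal.le_add_left x n)
        _ < ω := h1
        _ ≤ γ := hγ
        _ ≤ γ + n := Ordinal.le_add_right γ n
      · rw [if_neg h1]
        exact hx.2.2
    -- assemble
    have hstack : OT (g '' H) = OT (g '' D) + OT (g '' A) := by
      rw [himg]
      exact OT_union_stacked (fun s hs t ht => (hgDloc hs).trans_le (hgAloc ht).1)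
    have hHsum : OT H = OT A + OT D := by
      rw [hsplit]
      exact OT_union_stacked (fun s hs t ht => hs.2.trans_le (hDn t ht))
    have hOTD : OT D < Ordinal.lift.{u+1} (γ + n) := by
      calc OT D ≤ OT A + OT D := Ordinal.le_add_left _ _
      _ = OT H := hHsum.symm
      _ < Ordinal.lift.{u+1} (γ + n) := hOTH
    have hOTA : OT A ≤ Ordinal.lift.{u+1} n := by
      calc OT A ≤ OT (Iio n) := OT_mono Set.inter_subset_right
      _ = Ordinal.lift.{u+1} n := OT_Iio n
    calc OT (g '' H) = OT D + OT (g '' A) := by rw [hstack, hOTgD]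
    _ ≤ OT D + Ordinal.lift.{u+1} n := add_le_add le_rfl (hOTgA.le.trans hOTA)
    _ < Ordinal.lift.{u+1} (γ + n) + Ordinal.lift.{u+1} n :=
        add_lt_add_right_of_lt_omega0 hOTD (lift_lt_omega0 hn)
    _ = Ordinal.lift.{u+1} (γ + n + n) := by rw [← Ordinal.lift_add]

theorem OT_Ico (a b : Ordinal.{u}) : OT (Ico a (a + b)) = Ordinal.lift.{u+1} b := by
  have himg : Ico a (a + b) = (fun x => a + x) '' (Iio b) := by
    ext x
    constructor
    · rintro ⟨h1, h2⟩
      exact ⟨x - a, (Ordinal.sub_lt_of_le h1).mpr h2, Ordinal.add_sub_cancel_of_le h1⟩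
    · rintro ⟨y, hy, rfl⟩
      exact ⟨Ordinal.le_add_right _ _, add_lt_add_right hy a⟩
  rw [himg, OT_image (fun x _ y _ hxy => add_lt_add_right hxy a), OT_Iio]

theorem stepInf {γ α : Ordinal.{u}} (hα : ω ≤ α) {X : Type v} {τ : Set (Set X)}
    (h : OrdCompact (γ + α) (γ + α) X τ) : OrdCompact (γ + α + α) (γ + α + α) X τ := by
  classical
  set lam := α / ω with hlam
  set n := α % ω with hndef
  set μ := ω * lam with hμ
  have hω0 : (ω : Ordinal.{u}) ≠ 0 := omega0_ne_zero
  have h2ne : (2 : Ordinal.{u}) ≠ 0 := two_ne_zero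
  have h2pos : (0 : Ordinal.{u}) < 2 := by norm_num
  have h2ω : (2 : Ordinal.{u}) < ω := by
    have := nat_lt_omega0 2
    simpa using this
  have h2mul : (2 : Ordinal.{u}) * ω = ω := mul_omega0 h2pos h2ω
  have hmul2 : μ * 2 = μ + μ := by
    rw [show (2 : Ordinal.{u}) = 1 + 1 from one_add_one_eq_two.symm, mul_add, mul_one]
  have hμn : μ + n = α := Ordinal.div_add_mod α ω
  have hnω : n < ω := Ordinal.mod_lt α hω0
  have hlam1 : 0 < lam := (Ordinal.div_pos hω0).mpr hα
  have hωμ : ω ≤ μ := by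
    calc ω = ω * 1 := (mul_one ω).symm
    _ ≤ ω * lam := mul_le_mul_right (Order.one_le_iff_pos.mpr hlam1) ω
  have hnμ : n + μ = μ := by
    rcases eq_zero_or_pos n with h0 | h0
    · rw [h0, zero_add]
    · apply add_eq_right_iff_mul_omega0_le.mpr
      rw [mul_omega0 h0 hnω]
      exact hωμ
  have hβ : γ + α = γ + μ + n := by rw [← hμn, add_assoc]
  have hβ' : γ + α + α = γ + μ + μ + n := by
    conv_lhs => rw [← hμn]
    rw [show γ + (μ + n) = γ + μ + n from (add_assoc γ μ n).symm]
    rw [add_assoc (γ + μ) n (μ + n), ← add_assoc n μ n, hnμ, ← add_assoc]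
  -- parity facts
  have hpar : ∀ m : Ordinal.{u}, m % 2 = 0 ∨ m % 2 = 1 := by
    intro m
    have hlt : m % 2 < 2 := Ordinal.mod_lt m h2ne
    have h21 : (2 : Ordinal.{u}) = Order.succ 1 := by
      rw [← Ordinal.add_one_eq_succ, one_add_one_eq_two]
    rw [h21] at hlt
    rw [Order.lt_succ_iff] at hlt
    rw [← h21] at hlt
    exact Ordinal.le_one_iff.mp hlt
  -- half of a small ordinal is small
  have hhalf : ∀ m : Ordinal.{u}, m < ω → m / 2 < ω := by
    intro m hm
    exact (Ordinal.div_lt h2ne).mpr (by rwa [h2mul])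
  -- the value map on the μ-part
  have hkey : ∀ ξ : Ordinal.{u}, ξ < μ → ω * (ξ / ω) + ξ % ω / 2 < μ := by
    intro ξ hξ
    have hq : ξ / ω < lam := (Ordinal.div_lt hω0).mpr (by rwa [← hμ])
    calc ω * (ξ / ω) + ξ % ω / 2 < ω * (ξ / ω) + ω :=
          add_lt_add_right (hhalf _ (Ordinal.mod_lt ξ hω0)) _
    _ = ω * Order.succ (ξ / ω) := (mul_succ ω _).symm
    _ ≤ ω * lam := mul_le_mul_right (Order.succ_le_iff.mpr hq) ω
  -- reconstruction
  have hrecon : ∀ q k i : Ordinal.{u}, q < lam → k < ω → i < 2 →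
      ω * q + (2 * k + i) < μ ∧ (ω * q + (2 * k + i)) / ω = q ∧
      (ω * q + (2 * k + i)) % ω = 2 * k + i ∧ (2 * k + i) / 2 = k ∧ (2 * k + i) % 2 = i := by
    intro q k i hq hk hi
    have hiω : i < ω := hi.trans h2ω
    have hc : 2 * k + i < ω := principal_add_omega0 (principal_mul_omega0 h2ω hk) hiω
    refine ⟨?_, ?_, ?_, ?_, ?_⟩
    · calc ω * q + (2 * k + i) < ω * q + ω := add_lt_add_right hc _
      _ = ω * Order.succ q := (mul_succ ω q).symm
      _ ≤ ω * lam := mul_le_mul_right (Order.succ_le_iff.mpr hq) ω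
    · rw [Ordinal.mul_add_div _ hω0]
      have : (2 * k + i) / ω = 0 :=
        Ordinal.lt_one_iff_zero.mp ((Ordinal.div_lt hω0).mpr (by rwa [mul_one]))
      rw [this, add_zero]
    · rw [Ordinal.mul_add_mod_self, Ordinal.mod_eq_of_lt hc]
    · rw [Ordinal.mul_add_div _ h2ne]
      have : i / 2 = 0 :=
        Ordinal.lt_one_iff_zero.mp ((Ordinal.div_lt h2ne).mpr (by rwa [mul_one]))
      rw [this, add_zero]
    · rw [Ordinal.mul_add_mod_self, Ordinal.mod_eq_of_lt hi]
  set g : Ordinal.{u} → Ordinal.{u} := fun δ =>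
    if δ < γ then δ
    else if δ < γ + μ then
      γ + μ * ((δ - γ) % ω % 2) + (ω * ((δ - γ) / ω) + (δ - γ) % ω / 2)
    else γ + μ * 2 + (δ - (γ + μ)) with hg
  have hgmid : ∀ δ : Ordinal.{u}, γ ≤ δ → δ < γ + μ →
      g δ = γ + μ * ((δ - γ) % ω % 2) + (ω * ((δ - γ) / ω) + (δ - γ) % ω / 2) := by
    intro δ h1 h2
    simp only [g]
    rw [if_neg (not_lt.mpr h1), if_pos h2]
  have hgtop : ∀ δ : Ordinal.{u}, γ + μ ≤ δ → g δ = γ + μ * 2 + (δ - (γ + μ)) := by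
    intro δ h1
    have : ¬ δ < γ := not_lt.mpr ((Ordinal.le_add_right γ μ).trans h1)
    simp only [g]
    rw [if_neg this, if_neg (not_lt.mpr h1)]
  have hglow : ∀ δ : Ordinal.{u}, δ < γ → g δ = δ := by
    intro δ h1
    simp only [g]
    rw [if_pos h1]
  rw [hβ']
  rw [hβ] at h
  refine transfer g ?_ ?_ ?_ h
  · -- into Iio (γ+μ+μ+n)
    intro δ hδ
    by_cases h1 : δ < γ
    · rw [hglow δ h1]
      calc δ < γ := h1
      _ ≤ γ + μ + μ + n := ((Ordinal.le_add_right γ μ).trans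
          (Ordinal.le_add_right _ μ)).trans (Ordinal.le_add_right _ n)
    · push_neg at h1
      by_cases h2 : δ < γ + μ
      · rw [hgmid δ h1 h2]
        have hξ : δ - γ < μ := (Ordinal.sub_lt_of_le h1).mpr h2
        have hi1 : (δ - γ) % ω % 2 ≤ 1 := by
          rcases hpar ((δ - γ) % ω) with hp | hp <;> rw [hp] <;> norm_num
        calc γ + μ * ((δ - γ) % ω % 2) + (ω * ((δ - γ) / ω) + (δ - γ) % ω / 2)
            < γ + μ * ((δ - γ) % ω % 2) + μ := add_lt_add_right (hkey _ hξ) _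
        _ ≤ γ + μ * 1 + μ := add_le_add_left (add_le_add_right (mul_le_mul_right hi1 μ) γ) μ
        _ = γ + μ + μ := by rw [mul_one]
        _ ≤ γ + μ + μ + n := Ordinal.le_add_right _ n
      · push_neg at h2
        rw [hgtop δ h2]
        have hr : δ - (γ + μ) < n := (Ordinal.sub_lt_of_le h2).mpr hδ
        calc γ + μ * 2 + (δ - (γ + μ)) < γ + μ * 2 + n := add_lt_add_right hr _
        _ = γ + μ + μ + n := by rw [hmul2, ← add_assoc]
  · -- surjective
    intro ε hε
    by_cases e1 : ε < γ
    · refine ⟨ε, ?_, hglow ε e1⟩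
      calc ε < γ := e1
      _ ≤ γ + μ + n := (Ordinal.le_add_right γ μ).trans (Ordinal.le_add_right _ n)
    · push_neg at e1
      by_cases e2 : ε < γ + μ
      · set η := ε - γ with hη
        have hηlt : η < μ := (Ordinal.sub_lt_of_le e1).mpr e2
        have hq : η / ω < lam := (Ordinal.div_lt hω0).mpr (by rwa [← hμ])
        have hm : η % ω < ω := Ordinal.mod_lt η hω0
        obtain ⟨hre1, hre2, hre3, hre4, hre5⟩ := hrecon (η / ω) (η % ω) 0 hq hm h2pos
        rw [add_zero] at hre1 hre2 hre3 hre4 hre5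
        set δ := γ + (ω * (η / ω) + 2 * (η % ω)) with hδdef
        refine ⟨δ, ?_, ?_⟩
        · calc δ < γ + μ := add_lt_add_right hre1 γ
          _ ≤ γ + μ + n := Ordinal.le_add_right _ n
        · have hδγ : γ ≤ δ := Ordinal.le_add_right _ _
          rw [hgmid δ hδγ (add_lt_add_right hre1 γ), hδdef, Ordinal.add_sub_cancel,
            hre2, hre3, hre4, hre5, mul_zero, add_zero, Ordinal.div_add_mod]
          exact Ordinal.add_sub_cancel_of_le e1
      · push_neg at e2
        by_cases e3 : ε < γ + μ + μ
        · set η := ε - (γ + μ) with hη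
          have hηlt : η < μ := (Ordinal.sub_lt_of_le e2).mpr e3
          have hq : η / ω < lam := (Ordinal.div_lt hω0).mpr (by rwa [← hμ])
          have hm : η % ω < ω := Ordinal.mod_lt η hω0
          have h12 : (1 : Ordinal.{u}) < 2 := by norm_num
          obtain ⟨hre1, hre2, hre3, hre4, hre5⟩ := hrecon (η / ω) (η % ω) 1 hq hm h12
          set δ := γ + (ω * (η / ω) + (2 * (η % ω) + 1)) with hδdef
          refine ⟨δ, ?_, ?_⟩
          · calc δ < γ + μ := add_lt_add_right hre1 γ
            _ ≤ γ + μ + n := Ordinal.le_add_right _ n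
          · have hδγ : γ ≤ δ := Ordinal.le_add_right _ _
            rw [hgmid δ hδγ (add_lt_add_right hre1 γ), hδdef, Ordinal.add_sub_cancel,
              hre2, hre3, hre4, hre5, mul_one, Ordinal.div_add_mod, add_assoc]
            rw [← add_assoc]
            exact Ordinal.add_sub_cancel_of_le e2
        · push_neg at e3
          set r := ε - (γ + μ + μ) with hr
          have hrn : r < n := (Ordinal.sub_lt_of_le e3).mpr hε
          set δ := γ + μ + r with hδdef
          refine ⟨δ, ?_, ?_⟩
          · exact add_lt_add_right hrn _
          · rw [hgtop δ (Ordinal.le_add_right _ _), hδdef, Ordinal.add_sub_cancel,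
              hmul2, ← add_assoc]
            exact Ordinal.add_sub_cancel_of_le e3
  · -- order types
    intro H hH hOTH
    set A : Set Ordinal.{u} := H ∩ Iio γ with hA
    set B : Set Ordinal.{u} := H ∩ Ico γ (γ + μ) with hB
    set B0 : Set Ordinal.{u} := {x | x ∈ B ∧ (x - γ) % ω % 2 = 0} with hB0
    set B1 : Set Ordinal.{u} := {x | x ∈ B ∧ (x - γ) % ω % 2 = 1} with hB1
    set C : Set Ordinal.{u} := H ∩ Ico (γ + μ) (γ + μ + n) with hC
    have hsplit : H = (A ∪ B) ∪ C := by
      ext x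
      constructor
      · intro hx
        by_cases h1 : x < γ
        · exact Or.inl (Or.inl ⟨hx, h1⟩)
        · push_neg at h1
          by_cases h2 : x < γ + μ
          · exact Or.inl (Or.inr ⟨hx, h1, h2⟩)
          · push_neg at h2
            exact Or.inr ⟨hx, h2, hH hx⟩
      · rintro ((⟨hx, _⟩ | ⟨hx, _⟩) | ⟨hx, _⟩) <;> exact hx
    have hB01 : B = B0 ∪ B1 := by
      ext x
      constructor
      · intro hx
        rcases hpar ((x - γ) % ω) with hp | hp
        · exact Or.inl ⟨hx, hp⟩
        · exact Or.inr ⟨hx, hp⟩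
      · rintro (⟨hx, _⟩ | ⟨hx, _⟩) <;> exact hx
    -- strict monotonicity of g on B0, B1, C, A
    have hmono : ∀ i : Ordinal.{u}, ∀ x ∈ B, ∀ y ∈ B, (x - γ) % ω % 2 = i →
        (y - γ) % ω % 2 = i → x < y → g x < g y := by
      intro i x hx y hy hpx hpy hxy
      have hxγ : γ ≤ x := hx.2.1
      have hyγ : γ ≤ y := hy.2.1
      rw [hgmid x hxγ hx.2.2, hgmid y hyγ hy.2.2, hpx, hpy]
      apply add_lt_add_right
      set ξ := x - γ with hξ
      set ζ := y - γ with hζ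
      have hξζ : ξ < ζ := by
        have ex : γ + ξ = x := Ordinal.add_sub_cancel_of_le hxγ
        have ey : γ + ζ = y := Ordinal.add_sub_cancel_of_le hyγ
        have : γ + ξ < γ + ζ := by rw [ex, ey]; exact hxy
        exact (add_lt_add_iff_left γ).mp this
      have hq : ξ / ω ≤ ζ / ω := Ordinal.div_le_left hξζ.le ω
      rcases lt_or_eq_of_le hq with hqlt | hqeq
      · calc ω * (ξ / ω) + ξ % ω / 2 < ω * (ξ / ω) + ω :=
              add_lt_add_right (hhalf _ (Ordinal.mod_lt ξ hω0)) _
        _ = ω * Order.succ (ξ / ω) := (mul_succ ω _).symm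
        _ ≤ ω * (ζ / ω) := mul_le_mul_right (Order.succ_le_iff.mpr hqlt) ω
        _ ≤ ω * (ζ / ω) + ζ % ω / 2 := Ordinal.le_add_right _ _
      · rw [hqeq]
        apply add_lt_add_right
        have hm : ξ % ω < ζ % ω := by
          have ex : ω * (ζ / ω) + ξ % ω = ξ := by rw [← hqeq]; exact Ordinal.div_add_mod ξ ω
          have ey : ω * (ζ / ω) + ζ % ω = ζ := Ordinal.div_add_mod ζ ω
          have : ω * (ζ / ω) + ξ % ω < ω * (ζ / ω) + ζ % ω := by rw [ex, ey]; exact hξζ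
          exact (add_lt_add_iff_left _).mp this
        have hk : ξ % ω / 2 ≤ ζ % ω / 2 := Ordinal.div_le_left hm.le 2
        rcases lt_or_eq_of_le hk with hklt | hkeq
        · exact hklt
        · exfalso
          have ex : 2 * (ξ % ω / 2) + ξ % ω % 2 = ξ % ω := Ordinal.div_add_mod _ 2
          have ey : 2 * (ζ % ω / 2) + ζ % ω % 2 = ζ % ω := Ordinal.div_add_mod _ 2
          rw [hpx] at ex
          rw [hpy] at ey
          rw [hkeq] at ex
          rw [ex] at ey
          exact absurd ey (ne_of_lt hm)
    have hgA : g '' A = A := by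
      have h1 : ∀ x ∈ A, g x = id x := fun x hx => hglow x hx.2
      rw [Set.image_congr h1, Set.image_id]
    have hOTB0 : OT (g '' B0) = OT B0 :=
      OT_image (fun x hx y hy => hmono 0 x hx.1 y hy.1 hx.2 hy.2)
    have hOTB1 : OT (g '' B1) = OT B1 :=
      OT_image (fun x hx y hy => hmono 1 x hx.1 y hy.1 hx.2 hy.2)
    have hgConC : ∀ x ∈ C, g x = γ + μ * 2 + (x - (γ + μ)) := fun x hx => hgtop x hx.2.1
    have hOTC : OT (g '' C) = OT C := by
      apply OT_image
      intro x hx y hy hxy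
      rw [hgConC x hx, hgConC y hy]
      apply add_lt_add_right
      have ex : (γ + μ) + (x - (γ + μ)) = x := Ordinal.add_sub_cancel_of_le hx.2.1
      have ey : (γ + μ) + (y - (γ + μ)) = y := Ordinal.add_sub_cancel_of_le hy.2.1
      have : (γ + μ) + (x - (γ + μ)) < (γ + μ) + (y - (γ + μ)) := by rw [ex, ey]; exact hxy
      exact (add_lt_add_iff_left _).mp this
    -- locations of images
    have hlocB0 : g '' B0 ⊆ Ico γ (γ + μ) := by
      rintro _ ⟨x, hx, rfl⟩
      rw [hgmid x hx.1.2.1 hx.1.2.2, hx.2, mul_zero, add_zero]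
      have hξ : x - γ < μ := (Ordinal.sub_lt_of_le hx.1.2.1).mpr hx.1.2.2
      exact ⟨Ordinal.le_add_right _ _, add_lt_add_right (hkey _ hξ) γ⟩
    have hlocB1 : g '' B1 ⊆ Ico (γ + μ) (γ + μ + μ) := by
      rintro _ ⟨x, hx, rfl⟩
      rw [hgmid x hx.1.2.1 hx.1.2.2, hx.2, mul_one]
      have hξ : x - γ < μ := (Ordinal.sub_lt_of_le hx.1.2.1).mpr hx.1.2.2
      exact ⟨Ordinal.le_add_right _ _, add_lt_add_right (hkey _ hξ) (γ + μ)⟩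
    have hlocC : g '' C ⊆ Ico (γ + μ + μ) (γ + μ + μ + n) := by
      rintro _ ⟨x, hx, rfl⟩
      rw [hgConC x hx]
      have hr : x - (γ + μ) < n := (Ordinal.sub_lt_of_le hx.2.1).mpr hx.2.2
      constructor
      · rw [hmul2, ← add_assoc]
        exact Ordinal.le_add_right _ _
      · rw [hmul2, ← add_assoc]
        exact add_lt_add_right hr _
    have hlocA : g '' A ⊆ Iio γ := by
      rw [hgA]
      exact fun x hx => hx.2
    -- order-type computation
    have himgsplit : g '' H = ((g '' A ∪ g '' B0) ∪ g '' B1) ∪ g '' C := by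
      rw [hsplit, hB01]
      rw [Set.image_union, Set.image_union, Set.image_union]
      rw [← Set.union_assoc (g '' A) (g '' B0) (g '' B1)]
    have hOTgH : OT (g '' H) = OT (g '' A) + OT (g '' B0) + OT (g '' B1) + OT (g '' C) := by
      rw [himgsplit]
      rw [OT_union_stacked, OT_union_stacked, OT_union_stacked]
      · intro s hs t ht
        exact (hlocA hs).trans_le (hlocB0 ht).1
      · intro s hs t ht
        rcases hs with hs | hs
        · exact ((hlocA hs).trans_le ((Ordinal.le_add_right γ μ))).trans_le (hlocB1 ht).1
        · exact (hlocB0 hs).2.trans_le (hlocB1 ht).1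
      · intro s hs t ht
        have hsl : s < γ + μ + μ := by
          rcases hs with (hs | hs) | hs
          · exact ((hlocA hs).trans_le (Ordinal.le_add_right γ μ)).trans_le
              (Ordinal.le_add_right _ μ)
          · exact (hlocB0 hs).2.trans_le (Ordinal.le_add_right _ μ)
          · exact (hlocB1 hs).2
        exact hsl.trans_le (hlocC ht).1
    have hOTH' : OT H = OT A + OT B + OT C := by
      rw [hsplit]
      rw [OT_union_stacked, OT_union_stacked]
      · intro s hs t ht
        exact hs.2.trans_le ht.2.1
      · intro s hs t ht
        have : s < γ + μ := by
          rcases hs with hs | hs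
          · exact hs.2.trans_le (Ordinal.le_add_right γ μ)
          · exact hs.2.2
        exact this.trans_le ht.2.1
    -- bounds
    have hbA : OT A ≤ Ordinal.lift.{u+1} γ := by
      rw [← OT_Iio]
      exact OT_mono (fun x hx => hx.2)
    have hbB : OT B ≤ Ordinal.lift.{u+1} μ := by
      rw [← OT_Ico γ μ]
      exact OT_mono (fun x hx => hx.2)
    have hbB0 : OT B0 ≤ OT B := OT_mono (fun x hx => hx.1)
    have hbB1 : OT B1 ≤ OT B := OT_mono (fun x hx => hx.1)
    have hbC : OT C ≤ Ordinal.lift.{u+1} n := by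
      rw [← OT_Ico (γ + μ) n]
      exact OT_mono (fun x hx => hx.2)
    have hyp : OT A + OT B + OT C <
        Ordinal.lift.{u+1} γ + Ordinal.lift.{u+1} μ + Ordinal.lift.{u+1} n := by
      rw [← hOTH', ← Ordinal.lift_add, ← Ordinal.lift_add]
      exact hOTH
    have hfinal := keyIneq (lift_lt_omega0 hnω) hbA hbB hbB0 hbB1 hbC hyp
    rw [hOTgH, hOTB0, hOTB1, hOTC]
    calc OT (g '' A) + OT B0 + OT B1 + OT C = OT A + OT B0 + OT B1 + OT C := by rw [hgA]
    _ < Ordinal.lift.{u+1} γ + Ordinal.lift.{u+1} μ + Ordinal.lift.{u+1} μ +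
        Ordinal.lift.{u+1} n := hfinal
    _ = Ordinal.lift.{u+1} (γ + μ + μ + n) := by
        rw [← Ordinal.lift_add, ← Ordinal.lift_add, ← Ordinal.lift_add]


/-- Corollary 2.7(2): if either `γ` or `α` is infinite, then
`[γ + α, γ + α]`-compactness implies `[γ + α + α, γ + α + α]`-compactness, hence also
`[γ + α·n, γ + α·n]`-compactness for every (nonzero) `n < ω`. -/
theorem ordCompact_add_add {γ α : Ordinal} (hinf : ω ≤ γ ∨ ω ≤ α) (hne : γ + α ≠ 0)
    {X : Type*} (hX : Nonempty X) {τ : Set (Set X)} (hτ : τ.Nonempty)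
    (h : OrdCompact (γ + α) (γ + α) X τ) :
    OrdCompact (γ + α + α) (γ + α + α) X τ ∧
      ∀ n : ℕ, n ≠ 0 → OrdCompact (γ + α * n) (γ + α * n) X τ := by
  have step : ∀ γ' : Ordinal, (ω ≤ γ' ∨ ω ≤ α) → OrdCompact (γ' + α) (γ' + α) X τ →
      OrdCompact (γ' + α + α) (γ' + α + α) X τ := by
    intro γ' hinf' hc
    rcases hinf' with hg | ha
    · rcases lt_or_ge α ω with haω | haω
      · exact stepFin hg haω hc
      · exact stepInf haω hc
    · exact stepInf ha hc
  refine ⟨step γ hinf h, ?_⟩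
  have Q : ∀ m : ℕ, OrdCompact (γ + α * (m + 1 : ℕ)) (γ + α * (m + 1 : ℕ)) X τ := by
    intro m
    induction m with
    | zero =>
      have e0 : ((0 + 1 : ℕ) : Ordinal) = 1 := by norm_num
      rw [e0, mul_one]
      exact h
    | succ k ih =>
      have e1 : γ + α * ((k + 1 : ℕ) : Ordinal) = γ + α * (k : ℕ) + α := by
        push_cast
        rw [mul_add, mul_one, add_assoc]
      have e2 : γ + α * ((k + 1 + 1 : ℕ) : Ordinal) = γ + α * (k : ℕ) + α + α := by
        push_cast
        rw [mul_add, mul_add, mul_one, ← add_assoc, ← add_assoc]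
      have hinf2 : ω ≤ γ + α * (k : ℕ) ∨ ω ≤ α := by
        rcases hinf with hg | ha
        · exact Or.inl (hg.trans (Ordinal.le_add_right _ _))
        · exact Or.inr ha
      rw [e1] at ih
      rw [e2]
      exact step _ hinf2 ih
  intro n hn0
  obtain ⟨m, rfl⟩ : ∃ m, n = m + 1 := ⟨n - 1, (Nat.succ_pred_eq_of_pos (Nat.pos_of_ne_zero hn0)).symm⟩
  exact Q m
end

section
/- Let α be an infinite ordinal and β a nonzero ordinal with β ≤ |α| (the cardinality of α, regarded as an initial ordinal), X a nonempty set, and τ a nonempty family of subsets of X. Then the following are equivalent: (1) (X, τ) is [β, |α|]-compact; (2) (X, τ) is [β, α′]-compact for every ordinal α′ with β ≤ α′ < |α|⁺; (3) (X, τ) is [β, α]-compact. In particular, for infinite cardinals μ ≤ λ, [μ, λ]-compactness is equivalent to [μ, α′]-compactness for every α′ < λ⁺. -/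
open Ordinal Set Cardinal

universe u v

namespace OtypeAux

lemma exists_iso {a : Ordinal.{u}} {S : Set Ordinal.{u}} (hS : S ⊆ Set.Iio a) :
    ∃ o : Ordinal.{u}, Nonempty (S ≃o Set.Iio o) := by
  classical
  let g : ↥(Set.Iio a) ≃o a.ToType := Ordinal.ToType.mk
  let S' : Set a.ToType := (fun x : ↥(Set.Iio a) => g x) '' {x : ↥(Set.Iio a) | (x : Ordinal) ∈ S}
  refine ⟨Ordinal.type ((· < ·) : ↥S' → ↥S' → Prop), ⟨?_⟩⟩
  have hmem : ∀ x : ↥S, g ⟨(x : Ordinal), hS x.2⟩ ∈ S' := fun x => ⟨⟨(x : Ordinal), hS x.2⟩, x.2, rfl⟩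
  refine StrictMono.orderIsoOfSurjective
    (fun x => ⟨(Ordinal.typein ((· < ·) : ↥S' → ↥S' → Prop)).toRelEmbedding
        ⟨g ⟨(x : Ordinal), hS x.2⟩, hmem x⟩, Ordinal.typein_lt_type _ _⟩) ?_ ?_
  · intro x y hxy
    have h1 : (⟨(x : Ordinal), hS x.2⟩ : ↥(Set.Iio a)) < ⟨(y : Ordinal), hS y.2⟩ := hxy
    have h2 : (⟨g ⟨(x : Ordinal), hS x.2⟩, hmem x⟩ : ↥S') < ⟨g ⟨(y : Ordinal), hS y.2⟩, hmem y⟩ :=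
      g.strictMono h1
    exact (Ordinal.typein_lt_typein _).mpr h2
  · rintro ⟨z, hz⟩
    obtain ⟨w, hw⟩ := Ordinal.typein_surj ((· < ·) : ↥S' → ↥S' → Prop) hz
    obtain ⟨x', hx'S, hx'⟩ := w.2
    refine ⟨⟨(x' : Ordinal), hx'S⟩, ?_⟩
    apply Subtype.ext
    show (Ordinal.typein ((· < ·) : ↥S' → ↥S' → Prop)).toRelEmbedding _ = z
    rw [← hw]
    congr 1
    apply Subtype.ext
    show g ⟨(x' : Ordinal), _⟩ = (w : a.ToType)
    rw [← hx']

lemma spec {a : Ordinal.{u}} {S : Set Ordinal.{u}} (hS : S ⊆ Set.Iio a) :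
    Nonempty (S ≃o Set.Iio (otype.{u,u} S)) :=
  csInf_mem (exists_iso hS)

lemma iio_le {a b : Ordinal.{u}} (f : ↥(Set.Iio a) ↪o ↥(Set.Iio b)) : a ≤ b := by
  by_contra hba
  push_neg at hba
  have key : ∀ x : Ordinal.{u}, ∀ hx : x < a, x ≤ (f ⟨x, hx⟩ : Ordinal) := by
    intro x
    induction x using Ordinal.induction with
    | h x IH =>
      intro hx
      by_contra hlt
      push_neg at hlt
      have hya : (f ⟨x, hx⟩ : Ordinal) < a := hlt.trans hx
      have h1 : (f ⟨x, hx⟩ : Ordinal) ≤ (f ⟨(f ⟨x, hx⟩ : Ordinal), hya⟩ : Ordinal) :=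
        IH _ hlt hya
      have h2 : (⟨(f ⟨x, hx⟩ : Ordinal), hya⟩ : ↥(Set.Iio a)) < ⟨x, hx⟩ := hlt
      have h3 := f.strictMono h2
      exact absurd (h1.trans_lt h3) (lt_irrefl _)
  have hb := key b hba
  exact absurd (f ⟨b, hba⟩).2 (not_lt.mpr hb)

lemma otype_le {a b : Ordinal.{u}} {S T : Set Ordinal.{u}} (hS : S ⊆ Set.Iio a)
    (hT : T ⊆ Set.Iio b) (f : ↥S ↪o ↥T) : otype.{u,u} S ≤ otype.{u,u} T := by
  obtain ⟨eS⟩ := spec hS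
  obtain ⟨eT⟩ := spec hT
  exact iio_le ((eS.symm.toOrderEmbedding.trans f).trans eT.toOrderEmbedding)

lemma otype_congr {S T : Set Ordinal.{u}} (e : ↥S ≃o ↥T) : otype.{u,u} S = otype.{u,u} T := by
  unfold otype
  congr 1
  ext o
  exact ⟨fun ⟨i⟩ => ⟨e.symm.trans i⟩, fun ⟨i⟩ => ⟨e.trans i⟩⟩

lemma otype_Iio (a : Ordinal.{u}) : otype.{u,u} (Set.Iio a) = a := by
  have h1 : otype.{u,u} (Set.Iio a) ≤ a := csInf_le' ⟨OrderIso.refl _⟩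
  obtain ⟨e⟩ := spec (subset_refl (Set.Iio a))
  exact le_antisymm h1 (iio_le e.toOrderEmbedding)

lemma otype_mono {a : Ordinal.{u}} {S T : Set Ordinal.{u}} (hST : S ⊆ T) (hT : T ⊆ Set.Iio a) :
    otype.{u,u} S ≤ otype.{u,u} T :=
  otype_le (hST.trans hT) hT (OrderEmbedding.ofStrictMono (Set.inclusion hST)
    (fun _ _ h => h))

lemma otype_pos {a : Ordinal.{u}} {S : Set Ordinal.{u}} (hS : S ⊆ Set.Iio a)
    (hne : S.Nonempty) : 0 < otype.{u,u} S := by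
  obtain ⟨e⟩ := spec hS
  obtain ⟨x, hx⟩ := hne
  refine pos_iff_ne_zero.mpr fun h0 => ?_
  have h2 : ((e ⟨x, hx⟩ : ↥(Set.Iio (otype.{u,u} S))) : Ordinal) < otype.{u,u} S :=
    (e ⟨x, hx⟩).2
  exact absurd (lt_of_lt_of_le h2 (le_of_eq h0)) (not_lt_of_ge zero_le)

lemma otype_insert_top {a d : Ordinal.{u}} {S : Set Ordinal.{u}} (hS : S ⊆ Set.Iio a)
    (hd : d < a) (hlt : ∀ x ∈ S, x < d) :
    otype.{u,u} S + 1 ≤ otype.{u,u} (insert d S) := by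
  classical
  obtain ⟨e⟩ := spec hS
  have hins : insert d S ⊆ Set.Iio a := Set.insert_subset hd hS
  have f : ↥(Set.Iio (otype.{u,u} S + 1)) ↪o ↥(insert d S) := by
    refine OrderEmbedding.ofStrictMono
      (fun x => if h : (x : Ordinal) < otype.{u,u} S
        then ⟨(e.symm ⟨(x : Ordinal), h⟩ : Ordinal), Set.mem_insert_of_mem _ (e.symm _).2⟩
        else ⟨d, Set.mem_insert _ _⟩) ?_
    intro x y hxy
    have hxy' : (x : Ordinal) < (y : Ordinal) := hxy
    by_cases hy : (y : Ordinal) < otype.{u,u} S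
    · have hx : (x : Ordinal) < otype.{u,u} S := hxy'.trans hy
      simp only [dif_pos hx, dif_pos hy]
      exact Subtype.mk_lt_mk.mpr (Subtype.coe_lt_coe.mpr (e.symm.strictMono
        (show (⟨(x : Ordinal), hx⟩ : ↥(Set.Iio (otype.{u,u} S))) < ⟨y, hy⟩ from hxy')))
    · by_cases hx : (x : Ordinal) < otype.{u,u} S
      · simp only [dif_pos hx, dif_neg hy]
        exact Subtype.mk_lt_mk.mpr (hlt _ (e.symm ⟨(x : Ordinal), hx⟩).2)
      · exfalso
        have hxle : otype.{u,u} S ≤ (x : Ordinal) := not_lt.mp hx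
        have hy2 : (y : Ordinal) < otype.{u,u} S + 1 := y.2
        have hy3 : (y : Ordinal) ≤ otype.{u,u} S :=
          Order.lt_succ_iff.mp (lt_of_lt_of_eq hy2 (Ordinal.add_one_eq_succ _))
        exact hx (hxy'.trans_le hy3)
  calc otype.{u,u} S + 1 = otype.{u,u} (Set.Iio (otype.{u,u} S + 1)) := (otype_Iio _).symm
    _ ≤ otype.{u,u} (insert d S) := otype_le (subset_refl _) hins f

lemma otype_insert_zero {a : Ordinal.{u}} {S : Set Ordinal.{u}} (hS : S ⊆ Set.Iio a)
    (h0a : (0 : Ordinal.{u}) < a) :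
    otype.{u,u} (insert 0 S) ≤ 1 + otype.{u,u} S := by
  classical
  obtain ⟨e⟩ := spec hS
  have hins : insert 0 S ⊆ Set.Iio a := Set.insert_subset h0a hS
  have f : ↥(insert (0 : Ordinal.{u}) S) ↪o ↥(Set.Iio (1 + otype.{u,u} S)) := by
    refine OrderEmbedding.ofStrictMono
      (fun x => if h : (x : Ordinal) ∈ S
        then ⟨1 + (e ⟨(x : Ordinal), h⟩ : Ordinal), by
          have h2 : ((e ⟨(x : Ordinal), h⟩ : ↥(Set.Iio (otype.{u,u} S))) : Ordinal) <
              otype.{u,u} S := (e ⟨(x : Ordinal), h⟩).2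
          exact Set.mem_Iio.mpr ((add_lt_add_iff_left 1).mpr h2)⟩
        else ⟨0, by
          have : (0 : Ordinal.{u}) < 1 + otype.{u,u} S :=
            lt_of_lt_of_le zero_lt_one (le_self_add)
          exact this⟩) ?_
    intro x y hxy
    have hxy' : (x : Ordinal) < (y : Ordinal) := hxy
    by_cases hx : (x : Ordinal) ∈ S
    · by_cases hy : (y : Ordinal) ∈ S
      · simp only [dif_pos hx, dif_pos hy]
        have h3 := e.strictMono (show (⟨(x : Ordinal), hx⟩ : ↥S) < ⟨y, hy⟩ from hxy')
        exact Subtype.mk_lt_mk.mpr ((add_lt_add_iff_left 1).mpr (Subtype.coe_lt_coe.mpr h3))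
      · exfalso
        have : (y : Ordinal) = 0 := by
          rcases y.2 with h | h
          · exact h
          · exact absurd h hy
        rw [this] at hxy'
        exact absurd hxy' (not_lt_of_ge zero_le)
    · have hx0 : (x : Ordinal) = 0 := by
        rcases x.2 with h | h
        · exact h
        · exact absurd h hx
      by_cases hy : (y : Ordinal) ∈ S
      · simp only [dif_neg hx, dif_pos hy]
        exact Subtype.mk_lt_mk.mpr (lt_of_lt_of_le zero_lt_one (le_self_add))
      · exfalso
        have hy0 : (y : Ordinal) = 0 := by
          rcases y.2 with h | h
          · exact h
          · exact absurd h hy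
        rw [hx0, hy0] at hxy'
        exact lt_irrefl _ hxy'
  calc otype.{u,u} (insert 0 S) ≤ otype.{u,u} (Set.Iio (1 + otype.{u,u} S)) :=
      otype_le hins (subset_refl _) f
    _ = 1 + otype.{u,u} S := otype_Iio _

lemma one_add_le (γ : Ordinal.{u}) : 1 + γ ≤ γ + 1 := by
  rcases lt_or_ge γ Ordinal.omega0 with h | h
  · obtain ⟨n, rfl⟩ := Ordinal.lt_omega0.mp h
    rw [← Nat.cast_one (R := Ordinal.{u}), ← Nat.cast_add, ← Nat.cast_add, Nat.add_comm]
  · rw [Ordinal.one_add_of_omega0_le h]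
    exact le_self_add

lemma otype_card_le {a b : Ordinal.{u}} {K S : Set Ordinal.{u}} (hK : K ⊆ Set.Iio a)
    (hS : S ⊆ Set.Iio b) (f : ↥S ↪ ↥K) :
    (otype.{u,u} S).card ≤ (otype.{u,u} K).card := by
  obtain ⟨eS⟩ := spec hS
  obtain ⟨eK⟩ := spec hK
  have hf : #(↥(Set.Iio (otype.{u,u} S))) ≤ #(↥(Set.Iio (otype.{u,u} K))) :=
    Cardinal.mk_le_of_injective
      ((eS.symm.toEquiv.toEmbedding.trans (f.trans eK.toEquiv.toEmbedding)).injective)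
  rw [Ordinal.mk_Iio_ordinal, Ordinal.mk_Iio_ordinal] at hf
  exact Cardinal.lift_le.mp hf


lemma cover_iff {X : Type v} {S : Set Ordinal.{u}} {O : Ordinal.{u} → Set X} :
    (⋃ δ ∈ S, O δ) = Set.univ ↔ ∀ x, ∃ δ ∈ S, x ∈ O δ := by
  simp [Set.eq_univ_iff_forall]

lemma triv {β alp : Ordinal.{u}} {X : Type v} {τ : Set (Set X)} (h : alp < β) :
    OrdCompact β alp X τ := fun _ _ hcov =>
  ⟨Set.Iio alp, subset_refl _, by rw [otype_Iio]; exact h, hcov⟩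

lemma down {β lam alp : Ordinal.{u}} {X : Type v} {τ : Set (Set X)}
    (hc : OrdCompact β alp X τ) (h0 : 0 < lam) (hle : lam ≤ alp) :
    OrdCompact β lam X τ := by
  classical
  intro O hmem hcov
  set O' : Ordinal.{u} → Set X := fun δ => if δ < lam then O δ else O 0 with hO'
  have hmem' : ∀ δ < alp, O' δ ∈ τ := by
    intro δ hδ
    simp only [hO']
    split
    · exact hmem _ ‹_›
    · exact hmem 0 h0
  have hcov' : (⋃ δ ∈ Set.Iio alp, O' δ) = Set.univ := by
    rw [cover_iff]
    intro x
    obtain ⟨δ, hδ, hx⟩ := cover_iff.mp hcov x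
    have hδ' : δ < lam := hδ
    exact ⟨δ, lt_of_lt_of_le hδ' hle, by simpa only [hO', if_pos hδ'] using hx⟩
  obtain ⟨H', hsub, hot, hcovH⟩ := hc O' hmem' hcov'
  by_cases hin : H' ⊆ Set.Iio lam
  · refine ⟨H', hin, hot, ?_⟩
    rw [cover_iff]
    intro x
    obtain ⟨δ, hδ, hx⟩ := cover_iff.mp hcovH x
    have hδ' : δ < lam := hin hδ
    exact ⟨δ, hδ, by simpa only [hO', if_pos hδ'] using hx⟩
  · rw [Set.not_subset] at hin
    obtain ⟨d, hdH, hd⟩ := hin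
    have hdlam : lam ≤ d := not_lt.mp hd
    refine ⟨insert 0 (H' ∩ Set.Iio lam), ?_, ?_, ?_⟩
    · exact Set.insert_subset h0 Set.inter_subset_right
    · calc otype.{u,u} (insert 0 (H' ∩ Set.Iio lam))
          ≤ 1 + otype.{u,u} (H' ∩ Set.Iio lam) :=
            otype_insert_zero Set.inter_subset_right h0
        _ ≤ otype.{u,u} (H' ∩ Set.Iio lam) + 1 := one_add_le _
        _ ≤ otype.{u,u} (insert d (H' ∩ Set.Iio lam)) :=
            otype_insert_top (Set.inter_subset_left.trans hsub) (hsub hdH)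
              (fun x hx => lt_of_lt_of_le hx.2 hdlam)
        _ ≤ otype.{u,u} H' :=
            otype_mono (Set.insert_subset hdH Set.inter_subset_left) hsub
        _ < β := hot
    · rw [cover_iff]
      intro x
      obtain ⟨δ, hδ, hx⟩ := cover_iff.mp hcovH x
      by_cases hδl : δ < lam
      · exact ⟨δ, Set.mem_insert_of_mem _ ⟨hδ, hδl⟩, by simpa only [hO', if_pos hδl] using hx⟩
      · exact ⟨0, Set.mem_insert _ _, by simpa only [hO', if_neg hδl] using hx⟩

lemma up {c : Cardinal.{u}} {β alp : Ordinal.{u}} {X : Type v} {τ : Set (Set X)}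
    (hX : Nonempty X) (hβ : β ≤ c.ord) (hc : OrdCompact β c.ord X τ) (hcard : alp.card ≤ c)
    (h0 : 0 < alp) : OrdCompact β alp X τ := by
  classical
  intro O hmem hcov
  have hle : #(↥(Set.Iio alp)) ≤ #(↥(Set.Iio c.ord)) := by
    rw [Ordinal.mk_Iio_ordinal, Ordinal.mk_Iio_ordinal, Cardinal.lift_le, Cardinal.card_ord]
    exact hcard
  obtain ⟨emb⟩ := (Cardinal.le_def _ _).mp hle
  haveI : Nonempty ↥(Set.Iio alp) := ⟨⟨0, h0⟩⟩
  set b : ↥(Set.Iio c.ord) → ↥(Set.Iio alp) := Function.invFun emb with hb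
  have hbsurj : Function.Surjective b := Function.invFun_surjective emb.injective
  set bv : Ordinal.{u} → Ordinal.{u} :=
    fun δ => if h : δ < c.ord then (b ⟨δ, h⟩ : Ordinal) else 0 with hbv
  have hQmem : ∀ δ < c.ord, O (bv δ) ∈ τ := by
    intro δ h
    simp only [hbv, dif_pos h]
    exact hmem _ (b ⟨δ, h⟩).2
  have hbvlt : ∀ (δ : Ordinal.{u}) (h : δ < c.ord), bv δ = ((b ⟨δ, h⟩ : ↥(Set.Iio alp)) : Ordinal) := by
    intro δ h
    simp only [hbv, dif_pos h]
  have hQcov : (⋃ δ ∈ Set.Iio c.ord, O (bv δ)) = Set.univ := by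
    rw [cover_iff]
    intro x
    obtain ⟨i, hi, hx⟩ := cover_iff.mp hcov x
    obtain ⟨δ, hδ⟩ := hbsurj ⟨i, hi⟩
    refine ⟨(δ : Ordinal), δ.2, ?_⟩
    have hδc : (δ : Ordinal) < c.ord := δ.2
    have h3 : bv (δ : Ordinal) = i := by
      rw [hbvlt _ hδc]
      show ((b δ : ↥(Set.Iio alp)) : Ordinal) = i
      rw [hδ]
    rwa [h3]
  obtain ⟨K, hKsub, hKot, hKcov⟩ := hc _ hQmem hQcov
  set S : Set Ordinal.{u} := bv '' K with hSdef
  have hSsub : S ⊆ Set.Iio alp := by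
    rintro _ ⟨δ, hδ, rfl⟩
    have h2 : δ < c.ord := hKsub hδ
    rw [hbvlt _ h2]
    exact (b ⟨δ, h2⟩).2
  have hScov : (⋃ s ∈ S, O s) = Set.univ := by
    rw [cover_iff]
    intro x
    obtain ⟨δ, hδ, hx⟩ := cover_iff.mp hKcov x
    exact ⟨bv δ, Set.mem_image_of_mem _ hδ, hx⟩
  have hcardS : (otype.{u,u} S).card ≤ (otype.{u,u} K).card :=
    otype_card_le hKsub hSsub (Function.Embedding.ofSurjective _ Set.imageFactorization_surjective)
  have hσ : otype.{u,u} S < c.ord :=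
    Cardinal.lt_ord.mpr (lt_of_le_of_lt hcardS (Cardinal.lt_ord.mp (lt_of_lt_of_le hKot hβ)))
  have hSne : S.Nonempty := by
    obtain ⟨x⟩ := hX
    obtain ⟨s, hs, _⟩ := cover_iff.mp hScov x
    exact ⟨s, hs⟩
  have hσ0 : 0 < otype.{u,u} S := otype_pos hSsub hSne
  obtain ⟨eS⟩ := spec hSsub
  set ev : Ordinal.{u} → Ordinal.{u} :=
    fun i => if h : i < otype.{u,u} S then (eS.symm ⟨i, h⟩ : Ordinal) else 0 with hev
  have hevlt : ∀ (i : Ordinal.{u}) (h : i < otype.{u,u} S),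
      ev i = ((eS.symm ⟨i, h⟩ : ↥S) : Ordinal) := by
    intro i h
    simp only [hev, dif_pos h]
  have hPmem : ∀ i < otype.{u,u} S, O (ev i) ∈ τ := by
    intro i h
    rw [hevlt _ h]
    exact hmem _ (hSsub (eS.symm ⟨i, h⟩).2)
  have hPcov : (⋃ i ∈ Set.Iio (otype.{u,u} S), O (ev i)) = Set.univ := by
    rw [cover_iff]
    intro x
    obtain ⟨s, hs, hx⟩ := cover_iff.mp hScov x
    refine ⟨(eS ⟨s, hs⟩ : Ordinal), (eS ⟨s, hs⟩).2, ?_⟩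
    have hlt2 : ((eS ⟨s, hs⟩ : ↥(Set.Iio (otype.{u,u} S))) : Ordinal) < otype.{u,u} S :=
      (eS ⟨s, hs⟩).2
    have h3 : ev (eS ⟨s, hs⟩ : Ordinal) = s := by
      rw [hevlt _ hlt2]
      show ((eS.symm (eS ⟨s, hs⟩) : ↥S) : Ordinal) = s
      rw [OrderIso.symm_apply_apply]
    rwa [h3]
  obtain ⟨G, hGsub, hGot, hGcov⟩ := down hc hσ0 (le_of_lt hσ) _ hPmem hPcov
  refine ⟨ev '' G, ?_, ?_, ?_⟩
  · rintro _ ⟨i, hi, rfl⟩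
    have h2 : i < otype.{u,u} S := hGsub hi
    rw [hevlt _ h2]
    exact hSsub (eS.symm ⟨i, h2⟩).2
  · have hiso : ↥G ≃o ↥(ev '' G) := by
      refine StrictMono.orderIsoOfSurjective
        (fun x => ⟨ev (x : Ordinal), Set.mem_image_of_mem _ x.2⟩) ?_ ?_
      · intro x y hxy
        have hxy' : (x : Ordinal) < (y : Ordinal) := hxy
        have hx : (x : Ordinal) < otype.{u,u} S := hGsub x.2
        have hy : (y : Ordinal) < otype.{u,u} S := hGsub y.2
        refine Subtype.mk_lt_mk.mpr ?_
        rw [hevlt _ hx, hevlt _ hy]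
        exact Subtype.coe_lt_coe.mpr (eS.symm.strictMono
          (show (⟨(x : Ordinal), hx⟩ : ↥(Set.Iio (otype.{u,u} S))) < ⟨y, hy⟩ from hxy'))
      · rintro ⟨_, i, hi, rfl⟩
        exact ⟨⟨i, hi⟩, rfl⟩
    rw [← otype_congr hiso]
    exact hGot
  · rw [cover_iff]
    intro x
    obtain ⟨i, hi, hx⟩ := cover_iff.mp hGcov x
    exact ⟨ev i, Set.mem_image_of_mem _ hi, hx⟩

end OtypeAux

open OtypeAux in
/-- Corollary 2.8: for `α` infinite and `0 < β ≤ |α|`, the properties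
`[β, |α|]`-compactness, `[β, α']`-compactness for all `β ≤ α' < |α|⁺`, and
`[β, α]`-compactness are equivalent. In particular, for infinite cardinals `μ ≤ λ`,
`[μ, λ]`-compactness is equivalent to `[μ, α']`-compactness for every `α' < λ⁺`. -/
theorem ordCompact_initial {α β : Ordinal} (hα : ω ≤ α) (hβ : β ≠ 0)
    (hβα : β ≤ α.card.ord)
    {X : Type*} (hX : Nonempty X) {τ : Set (Set X)} (hτ : τ.Nonempty) :
    ((OrdCompact β α.card.ord X τ ↔
        ∀ α' : Ordinal, β ≤ α' → α' < (Order.succ α.card).ord → OrdCompact β α' X τ) ∧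
      (OrdCompact β α.card.ord X τ ↔ OrdCompact β α X τ)) ∧
    (∀ μ lam : Cardinal, ℵ₀ ≤ μ → μ ≤ lam →
      (OrdCompact μ.ord lam.ord X τ ↔
        ∀ α' : Ordinal, α' < (Order.succ lam).ord → OrdCompact μ.ord α' X τ)) := by
  have hβpos : (0 : Ordinal) < β := pos_iff_ne_zero.mpr hβ
  have hκpos : (0 : Ordinal) < α.card.ord := hβpos.trans_le hβα
  have h12 : OrdCompact β α.card.ord X τ →
      ∀ α' : Ordinal, β ≤ α' → α' < (Order.succ α.card).ord → OrdCompact β α' X τ :=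
    fun h α' hβα' hα' =>
      up hX hβα h (Cardinal.card_le_iff.mpr hα') (hβpos.trans_le hβα')
  have h21 : (∀ α' : Ordinal, β ≤ α' → α' < (Order.succ α.card).ord → OrdCompact β α' X τ) →
      OrdCompact β α.card.ord X τ := by
    intro h
    refine h _ hβα (Cardinal.lt_ord.mpr ?_)
    rw [Cardinal.card_ord]
    exact Order.lt_succ _
  refine ⟨⟨⟨h12, h21⟩, ⟨?_, ?_⟩⟩, ?_⟩
  · intro h
    exact h12 h α (hβα.trans (Cardinal.ord_card_le α)) (Cardinal.lt_ord_succ_card α)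
  · intro h
    exact down h hκpos (Cardinal.ord_card_le α)
  · intro μ lam hμ hμlam
    have hμpos : (0 : Ordinal) < μ.ord := by
      have h1 : Cardinal.ord ℵ₀ ≤ μ.ord := Cardinal.ord_le_ord.mpr hμ
      rw [Cardinal.ord_aleph0] at h1
      exact lt_of_lt_of_le Ordinal.omega0_pos h1
    constructor
    · intro h α' hα'
      rcases lt_or_ge α' μ.ord with hlt | hge
      · exact triv hlt
      · exact up hX (Cardinal.ord_le_ord.mpr hμlam) h (Cardinal.card_le_iff.mpr hα')
          (hμpos.trans_le hge)
    · intro h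
      refine h lam.ord (Cardinal.lt_ord.mpr ?_)
      rw [Cardinal.card_ord]
      exact Order.lt_succ _
end

section
/- Let α be an ordinal whose cofinality ν = cf(α) is infinite, X a nonempty set, and τ a nonempty family of subsets of X that is closed under arbitrary unions. If (X, τ) is [ν, ν]-compact, then (X, τ) is [α, α]-compact. -/
open Ordinal Set Cardinal

universe u

lemma exists_otype_iso {b : Ordinal.{u}} {S : Set Ordinal} (hS : S ⊆ Set.Iio b) :
    ∃ o : Ordinal.{u}, Nonempty (S ≃o Set.Iio o) := by
  let g : S → b.ToType := fun x => ToType.mk (o := b) ⟨x.1, hS x.2⟩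
  have hg : StrictMono g := fun x y hxy => by
    exact (OrderIso.lt_iff_lt _).2 (show (⟨x.1, hS x.2⟩ : Set.Iio b) < ⟨y.1, hS y.2⟩ from hxy)
  haveI : IsWellOrder (Set.range g) (· < ·) := isWellOrder_lt
  let o : Ordinal.{u} := Ordinal.type ((· < ·) : Set.range g → Set.range g → Prop)
  haveI : IsWellOrder o.ToType (· < ·) := isWellOrder_lt
  have hto : Ordinal.type ((· < ·) : Set.range g → Set.range g → Prop)
      = Ordinal.type ((· < ·) : o.ToType → o.ToType → Prop) := (type_toType o).symm
  obtain ⟨e2⟩ := Ordinal.type_eq.1 hto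
  exact ⟨o, ⟨(StrictMono.orderIso g hg).trans
    ((OrderIso.ofRelIsoLT e2).trans (ToType.mk (o := o)).symm)⟩⟩

/-- Corollary 2.7(8): if `ν = cf α` is infinite and `τ` is closed under arbitrary unions,
then `[ν, ν]`-compactness implies `[α, α]`-compactness. -/
theorem ordCompact_of_cof {α : Ordinal} (hν : ℵ₀ ≤ Ordinal.cof α)
    {X : Type*} (hX : Nonempty X) {τ : Set (Set X)} (hτ : τ.Nonempty)
    (hU : ∀ S ⊆ τ, ⋃₀ S ∈ τ)
    (h : OrdCompact (Ordinal.cof α).ord (Ordinal.cof α).ord X τ) :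
    OrdCompact α α X τ := by
  classical
  have hlim : Order.IsSuccLimit α := Ordinal.aleph0_le_cof.1 hν
  intro O hO hcov
  obtain ⟨f, hf⟩ := Ordinal.exists_fundamental_sequence α
  have hflt : ∀ i (hi : i < (Ordinal.cof α).ord), f i hi < α := fun i hi =>
    hf.blsub_eq ▸ Ordinal.lt_blsub f i hi
  set O' : Ordinal → Set X := fun ξ =>
    if hξ : ξ < (Ordinal.cof α).ord then ⋃₀ (O '' Set.Iio (f ξ hξ + 1)) else ∅ with hO'def
  have hsucclt : ∀ i (hi : i < (Ordinal.cof α).ord), f i hi + 1 < α := fun i hi => by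
    rw [Ordinal.add_one_eq_succ]; exact hlim.succ_lt (hflt i hi)
  have hO'τ : ∀ ξ < (Ordinal.cof α).ord, O' ξ ∈ τ := by
    intro ξ hξ
    simp only [hO'def, dif_pos hξ]
    refine hU _ ?_
    rintro _ ⟨δ, hδ, rfl⟩
    exact hO δ (hδ.trans (hsucclt ξ hξ))
  have hcov' : (⋃ ξ ∈ Set.Iio (Ordinal.cof α).ord, O' ξ) = Set.univ := by
    rw [Set.eq_univ_iff_forall]
    intro x
    have hx : x ∈ ⋃ δ ∈ Set.Iio α, O δ := hcov ▸ Set.mem_univ x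
    simp only [Set.mem_iUnion, Set.mem_Iio, exists_prop] at hx ⊢
    obtain ⟨δ, hδ, hxδ⟩ := hx
    have : δ < Ordinal.blsub _ f := hf.blsub_eq.symm ▸ hδ
    obtain ⟨i, hi, hle⟩ := Ordinal.lt_blsub_iff.1 this
    refine ⟨i, hi, ?_⟩
    simp only [hO'def, dif_pos hi]
    exact ⟨O δ, ⟨δ, by rw [Set.mem_Iio, Ordinal.add_one_eq_succ]; exact Order.lt_succ_iff.2 hle, rfl⟩, hxδ⟩
  obtain ⟨H, hHsub, hHo, hHcov⟩ := h O' hO'τ hcov'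
  obtain ⟨o0, ho0⟩ := exists_otype_iso hHsub
  have hmem : otype H ∈ {o : Ordinal | Nonempty (H ≃o Set.Iio o)} := csInf_mem ⟨o0, ho0⟩
  obtain ⟨e⟩ := hmem
  set g : (otype H).ToType → Ordinal := fun j =>
    if hξ : ((e.symm ((ToType.mk (o := otype H)).symm j) : H) : Ordinal) < (Ordinal.cof α).ord then
      f _ hξ + 1 else 0 with hgdef
  have ht : iSup g < α := by
    refine Ordinal.iSup_lt_ord ?_ ?_
    · rw [Cardinal.mk_toType]; exact Cardinal.lt_ord.1 hHo
    · intro j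
      split
      · exact hsucclt _ _
      · exact hlim.pos
  refine ⟨Set.Iio (iSup g), Set.Iio_subset_Iio ht.le, (csInf_le' (show iSup g ∈ {o : Ordinal | Nonempty ((Set.Iio (iSup g) : Set Ordinal) ≃o Set.Iio o)} from ⟨OrderIso.refl _⟩)).trans_lt ht, ?_⟩
  rw [Set.eq_univ_iff_forall]
  intro x
  have hx : x ∈ ⋃ ξ ∈ H, O' ξ := hHcov ▸ Set.mem_univ x
  simp only [Set.mem_iUnion, exists_prop] at hx ⊢
  obtain ⟨ξ, hξH, hxξ⟩ := hx
  have hξν : ξ < (Ordinal.cof α).ord := hHsub hξH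
  rw [hO'def] at hxξ
  simp only [dif_pos hξν] at hxξ
  obtain ⟨_, ⟨δ, hδ, rfl⟩, hxδ⟩ := hxξ
  refine ⟨δ, ?_, hxδ⟩
  have hj : g (ToType.mk (o := otype H) (e ⟨ξ, hξH⟩)) = f ξ hξν + 1 := by
    rw [hgdef]
    simp only [OrderIso.symm_apply_apply]
    exact dif_pos hξν
  have : f ξ hξν + 1 ≤ iSup g := hj ▸ le_ciSup (Ordinal.bddAbove_range _) _
  exact Set.mem_Iio.2 (lt_of_lt_of_le hδ this)
end

section
/- Let X be a nonempty set and τ a nonempty family of subsets of X such that (X, τ) is T₁, and let α be an infinite ordinal. Then (X, τ) is [α, α]-compact if and only if (X, τ) is [α + 1, α + 1]-compact. -/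
open Ordinal Set Cardinal

/-- `(X, τ)` is `T₁`: for every `O ∈ τ` and `x ∈ O`, also `O \ {x} ∈ τ`. -/
def IsT1Fam {X : Type*} (τ : Set (Set X)) : Prop :=
  ∀ O ∈ τ, ∀ x ∈ O, O \ {x} ∈ τ

universe u v

namespace OtypeAux

/-- The order type (in the next universe) of a set of ordinals. -/
noncomputable def t (S : Set Ordinal.{u}) : Ordinal.{u+1} :=
  Ordinal.type (Subrel ((· < ·) : Ordinal.{u} → Ordinal.{u} → Prop) (· ∈ S))

theorem t_mono {S T : Set Ordinal.{u}} (h : S ⊆ T) : t S ≤ t T := by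
  refine RelEmbedding.ordinal_type_le ⟨⟨Set.inclusion h, Set.inclusion_injective h⟩, ?_⟩
  intro a b
  exact Iff.rfl

theorem t_le_of_map {S T : Set Ordinal.{u}} (f : Ordinal.{u} → Ordinal.{u})
    (hmem : ∀ x ∈ S, f x ∈ T) (hmono : ∀ x ∈ S, ∀ y ∈ S, x < y → f x < f y) :
    t S ≤ t T := by
  refine RelEmbedding.ordinal_type_le
    ⟨⟨fun x => ⟨f x.1, hmem x.1 x.2⟩, ?_⟩, ?_⟩
  · rintro ⟨x, hx⟩ ⟨y, hy⟩ hxy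
    simp only [Subtype.mk.injEq] at hxy
    rcases lt_trichotomy x y with h | h | h
    · exact absurd hxy (ne_of_lt (hmono x hx y hy h))
    · exact Subtype.ext h
    · exact absurd hxy.symm (ne_of_lt (hmono y hy x hx h))
  · rintro ⟨x, hx⟩ ⟨y, hy⟩
    constructor
    · intro h
      rcases lt_trichotomy x y with h' | h' | h'
      · exact h'
      · subst h'
        exact absurd h (lt_irrefl _)
      · exact absurd (h.trans (hmono y hy x hx h')) (lt_irrefl _)
    · exact fun h => hmono x hx y hy h

theorem t_Iio (o : Ordinal.{u}) : t (Set.Iio o) = Ordinal.lift.{u+1} o :=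
  (Ordinal.type_subrel _ _).trans (Ordinal.typein_ordinal o)

theorem t_empty : t (∅ : Set Ordinal.{u}) = 0 := by
  rw [t, Ordinal.type_eq_zero_iff_isEmpty]
  exact ⟨fun x => x.2⟩

theorem t_singleton (a : Ordinal.{u}) : t ({a} : Set Ordinal.{u}) = 1 := by
  rw [t, Ordinal.type_eq_one_iff_unique]
  exact ⟨Set.uniqueSingleton a⟩

theorem t_union {A B : Set Ordinal.{u}} (h : ∀ a ∈ A, ∀ b ∈ B, a < b) :
    t (A ∪ B) = t A + t B := by
  unfold t
  rw [← Ordinal.type_sum_lex]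
  refine Eq.symm (RelIso.ordinal_type_eq ?_)
  classical
  refine ⟨Equiv.ofBijective (fun x => Sum.elim
    (fun a => ⟨a.1, Or.inl a.2⟩) (fun b => ⟨b.1, Or.inr b.2⟩) x) ⟨?_, ?_⟩, ?_⟩
  · rintro (⟨a, ha⟩ | ⟨a, ha⟩) (⟨b, hb⟩ | ⟨b, hb⟩) hab <;>
      simp only [Sum.elim_inl, Sum.elim_inr, Subtype.mk.injEq] at hab <;>
      obtain rfl := Subtype.mk.inj hab
    · rfl
    · exact absurd (h _ ha _ hb) (lt_irrefl _)
    · exact absurd (h _ hb _ ha) (lt_irrefl _)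
    · rfl
  · rintro ⟨x, hx | hx⟩
    · exact ⟨Sum.inl ⟨x, hx⟩, rfl⟩
    · exact ⟨Sum.inr ⟨x, hx⟩, rfl⟩
  · rintro (⟨a, ha⟩ | ⟨a, ha⟩) (⟨b, hb⟩ | ⟨b, hb⟩)
    · exact ⟨fun hh => Sum.Lex.inl hh, fun hh => by cases hh; assumption⟩
    · exact iff_of_true (h _ ha _ hb) (Sum.Lex.sep _ _)
    · exact iff_of_false (lt_asymm (h _ hb _ ha)) (by rintro ⟨⟩)
    · exact ⟨fun hh => Sum.Lex.inr hh, fun hh => by cases hh; assumption⟩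

theorem t_insert_of_lt {S : Set Ordinal.{u}} {a : Ordinal.{u}} (h : ∀ b ∈ S, b < a) :
    t (insert a S) = t S + 1 := by
  rw [Set.insert_eq, Set.union_comm,
    t_union (by rintro b hb c (rfl : c = a); exact h b hb), t_singleton]

theorem one_add_le_add_one (x : Ordinal.{v}) : 1 + x ≤ x + 1 := by
  rcases lt_or_ge x ω with hx | hx
  · obtain ⟨n, rfl⟩ := Ordinal.lt_omega0.mp hx
    rw [← Nat.cast_one, ← Nat.cast_add, ← Nat.cast_add, Nat.add_comm]
  · rw [Ordinal.one_add_of_omega0_le hx]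
    exact le_self_add

theorem t_insert_le (a : Ordinal.{u}) (S : Set Ordinal.{u}) :
    t (insert a S) ≤ t S + 1 := by
  by_cases ha : a ∈ S
  · rw [Set.insert_eq_self.mpr ha]
    exact le_self_add
  · have h1 : ∀ x ∈ S ∩ Set.Iio a, ∀ y ∈ S \ Set.Iio a, x < y := fun x hx y hy =>
      lt_of_lt_of_le hx.2 (not_lt.mp hy.2)
    have hS : t S = t (S ∩ Set.Iio a) + t (S \ Set.Iio a) := by
      rw [← t_union h1, Set.inter_union_diff]
    have hins : insert a S = (S ∩ Set.Iio a) ∪ insert a (S \ Set.Iio a) := by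
      ext x
      by_cases hx : x < a <;> simp only [Set.mem_insert_iff, Set.mem_union, Set.mem_inter_iff,
        Set.mem_diff, Set.mem_Iio, hx] <;> tauto
    have h2 : ∀ x ∈ S ∩ Set.Iio a, ∀ y ∈ insert a (S \ Set.Iio a), x < y := by
      rintro x hx y (rfl | hy)
      · exact hx.2
      · exact h1 x hx y hy
    have h3 : t (insert a (S \ Set.Iio a)) = 1 + t (S \ Set.Iio a) := by
      have hlt : ∀ b ∈ ({a} : Set Ordinal.{u}), ∀ y ∈ S \ Set.Iio a, b < y := by
        intro b hb y hy
        have hba : b = a := hb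
        have hay : b ≤ y := not_lt.mp fun hc => hy.2 (hba ▸ hc)
        rcases hay.lt_or_eq with h' | h'
        · exact h'
        · exact absurd hy.1 (by rw [← h', hba]; exact ha)
      rw [Set.insert_eq, t_union hlt, t_singleton]
    calc t (insert a S) = t (S ∩ Set.Iio a) + t (insert a (S \ Set.Iio a)) := by
          rw [hins, t_union h2]
      _ = t (S ∩ Set.Iio a) + (1 + t (S \ Set.Iio a)) := by rw [h3]
      _ ≤ t (S ∩ Set.Iio a) + (t (S \ Set.Iio a) + 1) :=
          add_le_add_right (one_add_le_add_one _) _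
      _ = t S + 1 := by rw [← add_assoc, ← hS]

theorem t_union_finset (S : Set Ordinal.{u}) (F : Finset Ordinal.{u}) :
    t (S ∪ ↑F) ≤ t S + F.card := by
  classical
  induction F using Finset.induction with
  | empty => simpa using le_refl (t S)
  | insert a F ha ih =>
    rw [Finset.coe_insert, Set.union_insert]
    calc t (insert a (S ∪ ↑F)) ≤ t (S ∪ ↑F) + 1 := t_insert_le _ _
      _ ≤ (t S + F.card) + 1 := add_le_add_left ih _
      _ = t S + (insert a F).card := by
          rw [add_assoc, Finset.card_insert_of_notMem ha, Nat.cast_succ]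

/-- `Iio o` is order isomorphic to `Iio (lift o)`. -/
noncomputable def liftIio (o : Ordinal.{u}) :
    Set.Iio o ≃o Set.Iio (Ordinal.lift.{v} o) := by
  refine StrictMono.orderIsoOfSurjective
    (fun x => ⟨Ordinal.lift.{v} x.1, Ordinal.lift_lt.mpr x.2⟩) ?_ ?_
  · intro x y hxy
    exact Ordinal.lift_lt.mpr hxy
  · rintro ⟨y, hy⟩
    obtain ⟨z, hz⟩ := Ordinal.mem_range_lift_of_le hy.le
    have hz' : Ordinal.lift.{v} z < Ordinal.lift.{v} o := hz ▸ hy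
    exact ⟨⟨z, Ordinal.lift_lt.mp hz'⟩, Subtype.ext hz⟩

noncomputable instance (S : Set Ordinal.{u}) :
    IsWellOrder S ((· < ·) : S → S → Prop) :=
  inferInstanceAs (IsWellOrder S (Subrel (· < ·) (· ∈ S)))

theorem otype_eq' {S : Set Ordinal.{u}} {o : Ordinal.{u}}
    (h : t S = Ordinal.lift.{u+1} o) :
    otype.{u,u} S = o := by
  have key : {o' : Ordinal.{u} | Nonempty (S ≃o Set.Iio o')} = {o} := by
    ext o'
    simp only [Set.mem_setOf_eq, Set.mem_singleton_iff]
    constructor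
    · rintro ⟨e⟩
      have : t S = t (Set.Iio o') := RelIso.ordinal_type_eq e.toRelIsoLT
      rw [h, t_Iio] at this
      exact (Ordinal.lift_inj.mp this.symm)
    · rintro rfl
      have e1 : Set.Iio (t S) ≃o S :=
        OrderIso.ofRelIsoLT (Ordinal.enum (Subrel ((· < ·) : Ordinal.{u} → _ → Prop) (· ∈ S)))
      have e2 : Set.Iio (t S) ≃o Set.Iio o' := by
        rw [h]
        exact (liftIio o').symm
      exact ⟨e1.symm.trans e2⟩
  unfold otype
  rw [key]
  exact csInf_singleton o

theorem lift_otype {S : Set Ordinal.{u}} {β : Ordinal.{u}} (hS : S ⊆ Set.Iio β) :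
    Ordinal.lift.{u+1} (otype.{u,u} S) = t S := by
  have hb : t S ≤ Ordinal.lift.{u+1} β := by rw [← t_Iio]; exact t_mono hS
  obtain ⟨o, ho⟩ := Ordinal.mem_range_lift_of_le hb
  rw [otype_eq' ho.symm, ho]

theorem add_nat_lt_of_limit {L a : Ordinal.{v}} (hL : Order.IsSuccLimit L) (ha : a < L) (n : ℕ) :
    a + n < L := by
  induction n with
  | zero => simpa using ha
  | succ k ih =>
    rw [Nat.cast_succ, ← add_assoc, add_one_eq_succ]
    exact hL.succ_lt ih

theorem exists_limit_add_nat (α : Ordinal.{u}) (hα : ω ≤ α) :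
    ∃ (l : Ordinal.{u}) (n : ℕ), Order.IsSuccLimit l ∧ α = l + n := by
  induction α using Ordinal.limitRecOn with
  | zero => exact absurd hα (by rw [nonpos_iff_eq_zero]; exact Ordinal.omega0_ne_zero)
  | add_one β ih =>
    have hβ : ω ≤ β := by
      by_contra hcon
      exact absurd (hα.trans_lt (Ordinal.isSuccLimit_omega0.succ_lt (not_le.mp hcon)))
        (lt_irrefl _)
    obtain ⟨l, n, hl, rfl⟩ := ih hβ
    exact ⟨l, n + 1, hl, by rw [Nat.cast_succ, ← add_assoc, add_one_eq_succ]⟩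
  | limit β hβ ih => exact ⟨β, 0, hβ, by simp⟩

end OtypeAux

theorem lt_succ_self (α : Ordinal.{u}) : α < α + 1 := by
  rw [Ordinal.add_one_eq_succ]; exact Order.lt_succ α

theorem forward {X : Type v} {τ : Set (Set X)} {α : Ordinal.{u}} (hα : ω ≤ α)
    (hc : OrdCompact α α X τ) : OrdCompact (α + 1) (α + 1) X τ := by
  classical
  intro W hW hcov
  have hαs : α < α + 1 := lt_succ_self α
  set O' : Ordinal.{u} → Set X := fun ε => if ε = 0 then W α else W (ε - 1) with hO'
  have h1 : ∀ δ < α, O' δ ∈ τ := by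
    intro δ hδ
    by_cases h0 : δ = 0
    · simp only [hO', h0, if_pos rfl]
      exact hW α hαs
    · simp only [hO', if_neg h0]
      exact hW (δ - 1) ((Ordinal.sub_le_self δ 1).trans_lt (hδ.trans hαs))
  have h2 : (⋃ δ ∈ Set.Iio α, O' δ) = Set.univ := by
    rw [Set.eq_univ_iff_forall]
    intro x
    have hx : x ∈ ⋃ δ ∈ Set.Iio (α + 1), W δ := hcov ▸ Set.mem_univ x
    simp only [Set.mem_iUnion, Set.mem_Iio, exists_prop] at hx ⊢
    obtain ⟨δ, hδ, hxδ⟩ := hx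
    by_cases hδα : δ = α
    · exact ⟨0, lt_of_lt_of_le Ordinal.omega0_pos hα,
        by simp only [hO', if_pos rfl]; exact hδα ▸ hxδ⟩
    · have hδα' : δ < α := by
        rcases lt_or_eq_of_le (by rwa [Ordinal.add_one_eq_succ, Order.lt_succ_iff] at hδ)
          with h | h
        · exact h
        · exact absurd h hδα
      have hne : (1 : Ordinal.{u}) + δ ≠ 0 :=
        ne_of_gt (lt_of_lt_of_le zero_lt_one (le_self_add))
      refine ⟨1 + δ, ?_, ?_⟩
      · have := (add_lt_add_iff_left 1).mpr hδα'
        rwa [Ordinal.one_add_of_omega0_le hα] at this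
      · simp only [hO', if_neg hne, Ordinal.add_sub_cancel]
        exact hxδ
  obtain ⟨H, hH, hHt, hHcov⟩ := hc O' h1 h2
  set K₀ : Set Ordinal.{u} := {δ | δ < α ∧ 1 + δ ∈ H} with hK₀
  set K : Set Ordinal.{u} := K₀ ∪ {δ | δ = α ∧ (0 : Ordinal.{u}) ∈ H} with hK
  have hKsub : K ⊆ Set.Iio (α + 1) := by
    rintro δ (⟨h, _⟩ | ⟨rfl, _⟩)
    · exact h.trans hαs
    · exact hαs
  have hK₀sub : K₀ ⊆ Set.Iio α := fun δ h => h.1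
  have ht0 : OtypeAux.t K₀ ≤ OtypeAux.t H := by
    refine OtypeAux.t_le_of_map (fun δ => 1 + δ) (fun x hx => hx.2) ?_
    exact fun x _ y _ h => (add_lt_add_iff_left 1).mpr h
  have hliftH : Ordinal.lift.{u+1} (otype.{u,u} H) = OtypeAux.t H := OtypeAux.lift_otype hH
  have hKt : otype.{u,u} K < α + 1 := by
    by_cases h0 : (0 : Ordinal.{u}) ∈ H
    · have hKeq : K = insert α K₀ := by
        ext δ
        simp only [hK, Set.mem_union, Set.mem_setOf_eq, Set.mem_insert_iff, h0, and_true]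
        tauto
      have : OtypeAux.t K ≤ OtypeAux.t H + 1 := by
        rw [hKeq]
        exact (OtypeAux.t_insert_le _ _).trans (add_le_add_left ht0 1)
      have hlift : Ordinal.lift.{u+1} (otype.{u,u} K) ≤ Ordinal.lift.{u+1} (otype.{u,u} H + 1) := by
        rw [OtypeAux.lift_otype hKsub, Ordinal.lift_add, Ordinal.lift_one, hliftH]
        exact this
      have := Ordinal.lift_le.mp hlift
      refine lt_of_le_of_lt this ?_
      rw [Ordinal.add_one_eq_succ, Ordinal.add_one_eq_succ]
      exact Order.succ_lt_succ hHt
    · have hKeq : K = K₀ := by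
        ext δ
        simp only [hK, Set.mem_union, Set.mem_setOf_eq, h0, and_false, or_false]
      have hlift : Ordinal.lift.{u+1} (otype.{u,u} K) ≤ Ordinal.lift.{u+1} (otype.{u,u} H) := by
        rw [OtypeAux.lift_otype hKsub, hliftH, hKeq]
        exact ht0
      exact lt_trans (lt_of_le_of_lt (Ordinal.lift_le.mp hlift) hHt) hαs
  refine ⟨K, hKsub, hKt, ?_⟩
  rw [Set.eq_univ_iff_forall]
  intro x
  have hx : x ∈ ⋃ ε ∈ H, O' ε := hHcov ▸ Set.mem_univ x
  simp only [Set.mem_iUnion, exists_prop] at hx ⊢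
  obtain ⟨ε, hεH, hxε⟩ := hx
  have hεα : ε < α := hH hεH
  by_cases hε0 : ε = 0
  · refine ⟨α, Or.inr ⟨rfl, hε0 ▸ hεH⟩, ?_⟩
    simpa only [hO', hε0, if_pos rfl] using hxε
  · have hle : (1 : Ordinal.{u}) ≤ ε := Ordinal.one_le_iff_ne_zero.mpr hε0
    have hsum : 1 + (ε - 1) = ε := Ordinal.add_sub_cancel_of_le hle
    refine ⟨ε - 1, Or.inl ⟨lt_of_le_of_lt (Ordinal.sub_le_self ε 1) hεα, hsum.symm ▸ hεH⟩, ?_⟩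
    simpa only [hO', if_neg hε0] using hxε

theorem otype_lt_of_t_lt {S : Set Ordinal.{u}} {β γ : Ordinal.{u}} (hS : S ⊆ Set.Iio β)
    (h : OtypeAux.t S < Ordinal.lift.{u+1} γ) : otype.{u,u} S < γ := by
  rw [← OtypeAux.lift_otype hS] at h
  exact Ordinal.lift_lt.mp h

theorem backward {X : Type v} (hX : Nonempty X) {τ : Set (Set X)} (hT1 : IsT1Fam τ)
    {α : Ordinal.{u}} (hα : ω ≤ α)
    (hc : OrdCompact (α + 1) (α + 1) X τ) : OrdCompact α α X τ := by
  classical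
  obtain ⟨l, n, hl, rfl⟩ := OtypeAux.exists_limit_add_nat α hα
  intro O hO hcov
  have hωl : ω ≤ l := Ordinal.omega0_le_of_isSuccLimit hl
  have hlle : l ≤ l + n := le_self_add
  have hln : ∀ j : ℕ, j < n → l + (j : Ordinal.{u}) < l + n := fun j hj =>
    (add_lt_add_iff_left l).mpr (Nat.cast_lt.mpr hj)
  have hdec : ∀ δ : Ordinal.{u}, δ < l + n → ¬δ < l → ∃ i : ℕ, i < n ∧ δ = l + i := by
    intro δ hδ hδl
    have hle : l ≤ δ := not_lt.mp hδl
    have h1 : l + (δ - l) = δ := Ordinal.add_sub_cancel_of_le hle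
    have h2 : δ - l < (n : Ordinal.{u}) := by
      rw [← add_lt_add_iff_left l, h1]; exact hδ
    obtain ⟨i, hi⟩ := Ordinal.lt_omega0.mp (h2.trans (Ordinal.nat_lt_omega0 n))
    refine ⟨i, ?_, by rw [← h1, hi]⟩
    rw [hi] at h2
    exact_mod_cast h2
  have hlift_ln : Ordinal.lift.{u+1} (l + n) = Ordinal.lift.{u+1} l + (n : Ordinal.{u+1}) := by
    rw [Ordinal.lift_add, Ordinal.lift_natCast]
  by_cases hA : ∃ j < n,
      ((⋃ δ ∈ Set.Iio l, O δ) ∪ ⋃ i ∈ {i : ℕ | i < n ∧ i ≠ j}, O (l + i)) = Set.univ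
  -- Case A : one of the top sets can be dropped
  · obtain ⟨j, hjn, hAcov⟩ := hA
    set F : Finset Ordinal.{u} := ((Finset.range n).erase j).image (fun i : ℕ => l + i) with hF
    refine ⟨Set.Iio l ∪ ↑F, ?_, ?_, ?_⟩
    · rintro δ (hδ | hδ)
      · exact lt_of_lt_of_le hδ hlle
      · simp only [hF, Finset.coe_image, Set.mem_image, Finset.mem_coe, Finset.mem_erase,
          Finset.mem_range] at hδ
        obtain ⟨i, ⟨hij, hin⟩, rfl⟩ := hδ
        exact Set.mem_Iio.mpr (hln i hin)
    · have hcard : (F.card : Ordinal.{u+1}) < (n : Ordinal.{u+1}) := by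
        have h1 : F.card < n := by
          refine lt_of_le_of_lt Finset.card_image_le ?_
          rw [Finset.card_erase_of_mem (Finset.mem_range.mpr hjn), Finset.card_range]
          exact Nat.sub_lt (lt_of_le_of_lt (Nat.zero_le j) hjn) one_pos
        exact_mod_cast h1
      refine otype_lt_of_t_lt (β := l + n) ?_ ?_
      · rintro δ (hδ | hδ)
        · exact lt_of_lt_of_le hδ hlle
        · simp only [hF, Finset.coe_image, Set.mem_image, Finset.mem_coe, Finset.mem_erase,
            Finset.mem_range] at hδ
          obtain ⟨i, ⟨hij, hin⟩, rfl⟩ := hδ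
          exact Set.mem_Iio.mpr (hln i hin)
      · calc OtypeAux.t (Set.Iio l ∪ ↑F) ≤ OtypeAux.t (Set.Iio l) + F.card :=
              OtypeAux.t_union_finset _ _
          _ = Ordinal.lift.{u+1} l + F.card := by rw [OtypeAux.t_Iio]
          _ < Ordinal.lift.{u+1} l + n := (add_lt_add_iff_left _).mpr hcard
          _ = Ordinal.lift.{u+1} (l + n) := hlift_ln.symm
    · rw [Set.eq_univ_iff_forall]
      intro x
      have hx : x ∈ (⋃ δ ∈ Set.Iio l, O δ) ∪ ⋃ i ∈ {i : ℕ | i < n ∧ i ≠ j}, O (l + i) :=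
        hAcov ▸ Set.mem_univ x
      simp only [Set.mem_union, Set.mem_iUnion, Set.mem_Iio, Set.mem_setOf_eq,
        exists_prop] at hx
      simp only [Set.mem_iUnion, exists_prop]
      rcases hx with ⟨δ, hδ, hxδ⟩ | ⟨i, ⟨hin, hij⟩, hxδ⟩
      · exact ⟨δ, Or.inl hδ, hxδ⟩
      · refine ⟨l + i, Or.inr ?_, hxδ⟩
        simp only [hF, Finset.coe_image, Set.mem_image, Finset.mem_coe, Finset.mem_erase,
          Finset.mem_range]
        exact ⟨i, ⟨hij, hin⟩, rfl⟩
  -- Case B : every top set is essential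
  · push_neg at hA
    have hxj : ∀ j : ℕ, j < n → ∃ p : X, (∀ δ, δ < l → p ∉ O δ) ∧
        ∀ i : ℕ, i < n → i ≠ j → p ∉ O (l + i) := by
      intro j hj
      obtain ⟨p, hp⟩ := (Set.ne_univ_iff_exists_notMem _).mp (hA j hj)
      simp only [Set.mem_union, Set.mem_iUnion, Set.mem_Iio, Set.mem_setOf_eq, exists_prop,
        not_or, not_exists, not_and] at hp
      exact ⟨p, fun δ hδ => hp.1 δ hδ, fun i hin hij => hp.2 i ⟨hin, hij⟩⟩
    choose xp hxp1 hxp2 using hxj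
    by_cases hY : ∃ δ₀, δ₀ < l ∧ (O δ₀).Nonempty
    -- Case B2 : some set with small index is nonempty; the main construction
    · obtain ⟨δ₀, hδ₀l, y, hyO⟩ := hY
      set V : Ordinal.{u} → Set X := fun i => if i < l + n then O i \ {y} else O δ₀ with hV
      have h1 : ∀ i < l + (n : Ordinal.{u}) + 1, V i ∈ τ := by
        intro i _
        by_cases hi : i < l + n
        · simp only [hV, if_pos hi]
          by_cases hyi : y ∈ O i
          · exact hT1 _ (hO i hi) y hyi
          · rw [Set.diff_singleton_eq_self hyi]
            exact hO i hi
        · simp only [hV, if_neg hi]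
          exact hO δ₀ (hδ₀l.trans_le hlle)
      have h2 : (⋃ i ∈ Set.Iio (l + (n : Ordinal.{u}) + 1), V i) = Set.univ := by
        rw [Set.eq_univ_iff_forall]
        intro x
        simp only [Set.mem_iUnion, Set.mem_Iio, exists_prop]
        by_cases hxy : x = y
        · refine ⟨l + n, lt_succ_self _, ?_⟩
          simp only [hV, if_neg (lt_irrefl _)]
          exact hxy ▸ hyO
        · have hx : x ∈ ⋃ δ ∈ Set.Iio (l + (n : Ordinal.{u})), O δ := hcov ▸ Set.mem_univ x
          simp only [Set.mem_iUnion, Set.mem_Iio, exists_prop] at hx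
          obtain ⟨δ, hδ, hxδ⟩ := hx
          refine ⟨δ, hδ.trans (lt_succ_self _), ?_⟩
          simp only [hV, if_pos hδ]
          exact ⟨hxδ, hxy⟩
      obtain ⟨H, hH, hHt, hHcov⟩ := hc V h1 h2
      have htH : OtypeAux.t H ≤ Ordinal.lift.{u+1} l + (n : Ordinal.{u+1}) := by
        rw [← hlift_ln, ← OtypeAux.lift_otype hH]
        apply Ordinal.lift_le.mpr
        rw [Ordinal.add_one_eq_succ, Order.lt_succ_iff] at hHt
        exact hHt
      have hmemtopn : l + (n : Ordinal.{u}) ∈ H := by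
        have hy : y ∈ ⋃ i ∈ H, V i := hHcov ▸ Set.mem_univ y
        simp only [Set.mem_iUnion, exists_prop] at hy
        obtain ⟨i, hiH, hyi⟩ := hy
        by_cases hi : i < l + n
        · simp only [hV, if_pos hi] at hyi
          exact absurd rfl hyi.2
        · have hile : i ≤ l + n := by
            have := hH hiH
            rwa [Set.mem_Iio, Ordinal.add_one_eq_succ, Order.lt_succ_iff] at this
          have : i = l + n := le_antisymm hile (not_lt.mp hi)
          exact this ▸ hiH
      have hmemtop : ∀ j : ℕ, j < n → l + (j : Ordinal.{u}) ∈ H := by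
        intro j hj
        have hx : xp j hj ∈ ⋃ i ∈ H, V i := hHcov ▸ Set.mem_univ _
        simp only [Set.mem_iUnion, exists_prop] at hx
        obtain ⟨i, hiH, hxi⟩ := hx
        by_cases hi : i < l + n
        · simp only [hV, if_pos hi] at hxi
          by_cases hil : i < l
          · exact absurd hxi.1 (hxp1 j hj i hil)
          · obtain ⟨i', hi'n, rfl⟩ := hdec i hi hil
            by_cases hij : i' = j
            · exact hij ▸ hiH
            · exact absurd hxi.1 (hxp2 j hj i' hi'n hij)
        · simp only [hV, if_neg hi] at hxi
          exact absurd hxi (hxp1 j hj δ₀ hδ₀l)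
      have hchain : ∀ j : ℕ, j ≤ n + 1 →
          OtypeAux.t (H ∩ Set.Iio (l + (j : Ordinal.{u}))) =
            OtypeAux.t (H ∩ Set.Iio l) + (j : Ordinal.{u+1}) := by
        intro j
        induction j with
        | zero => intro _; simp
        | succ k ih =>
          intro hk
          have hk' : k ≤ n := Nat.lt_succ_iff.mp hk
          have hmem : l + (k : Ordinal.{u}) ∈ H := by
            rcases hk'.lt_or_eq with h | h
            · exact hmemtop k h
            · exact h ▸ hmemtopn
          have hstep : l + ((k + 1 : ℕ) : Ordinal.{u}) = (l + k) + 1 := by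
            rw [Nat.cast_succ, add_assoc]
          have hset : H ∩ Set.Iio (l + ((k + 1 : ℕ) : Ordinal.{u})) =
              insert (l + (k : Ordinal.{u})) (H ∩ Set.Iio (l + k)) := by
            ext δ
            simp only [Set.mem_inter_iff, Set.mem_Iio, Set.mem_insert_iff]
            constructor
            · rintro ⟨hδH, hδlt⟩
              rw [hstep, Ordinal.add_one_eq_succ, Order.lt_succ_iff] at hδlt
              rcases hδlt.lt_or_eq with h | h
              · exact Or.inr ⟨hδH, h⟩
              · exact Or.inl h
            · rintro (rfl | ⟨hδH, hδlt⟩)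
              · exact ⟨hmem, by rw [hstep]; exact lt_succ_self _⟩
              · exact ⟨hδH, hδlt.trans (by rw [hstep]; exact lt_succ_self _)⟩
          rw [hset, OtypeAux.t_insert_of_lt (fun b hb => hb.2), ih (Nat.le_of_succ_le hk),
            Nat.cast_succ, add_assoc]
      have hHsubfull : H ⊆ Set.Iio (l + ((n + 1 : ℕ) : Ordinal.{u})) := by
        intro δ hδ
        have := hH hδ
        rwa [Nat.cast_succ, ← add_assoc]
      have hHfull : H ∩ Set.Iio (l + ((n + 1 : ℕ) : Ordinal.{u})) = H :=
        Set.inter_eq_self_of_subset_left hHsubfull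
      have ht0 : OtypeAux.t (H ∩ Set.Iio l) < Ordinal.lift.{u+1} l := by
        by_contra hcon
        have hcon' : Ordinal.lift.{u+1} l ≤ OtypeAux.t (H ∩ Set.Iio l) := not_lt.mp hcon
        have h1 : OtypeAux.t H = OtypeAux.t (H ∩ Set.Iio l) + ((n + 1 : ℕ) : Ordinal.{u+1}) := by
          have := hchain (n + 1) le_rfl
          rwa [hHfull] at this
        have h2 : Ordinal.lift.{u+1} l + ((n + 1 : ℕ) : Ordinal.{u+1}) ≤
            Ordinal.lift.{u+1} l + (n : Ordinal.{u+1}) := by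
          calc Ordinal.lift.{u+1} l + ((n + 1 : ℕ) : Ordinal.{u+1})
              ≤ OtypeAux.t (H ∩ Set.Iio l) + ((n + 1 : ℕ) : Ordinal.{u+1}) :=
                add_le_add_left hcon' _
            _ = OtypeAux.t H := h1.symm
            _ ≤ Ordinal.lift.{u+1} l + n := htH
        have h3 : ((n + 1 : ℕ) : Ordinal.{u+1}) ≤ (n : Ordinal.{u+1}) :=
          (add_le_add_iff_left _).mp h2
        have : (n : Ordinal.{u+1}) < ((n + 1 : ℕ) : Ordinal.{u+1}) :=
          Nat.cast_lt.mpr (Nat.lt_succ_self n)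
        exact absurd h3 (not_le.mpr this)
      set Fn : Finset Ordinal.{u} := (Finset.range n).image (fun i : ℕ => l + i) with hFn
      set K : Set Ordinal.{u} := insert δ₀ (H ∩ Set.Iio l) ∪ ↑Fn with hK
      have hKsub : K ⊆ Set.Iio (l + (n : Ordinal.{u})) := by
        rintro δ ((rfl | hδ) | hδ)
        · exact hδ₀l.trans_le hlle
        · exact hδ.2.trans_le hlle
        · simp only [hFn, Finset.coe_image, Set.mem_image, Finset.mem_coe,
            Finset.mem_range] at hδ
          obtain ⟨i, hin, rfl⟩ := hδ
          exact Set.mem_Iio.mpr (hln i hin)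
      refine ⟨K, hKsub, ?_, ?_⟩
      · refine otype_lt_of_t_lt (β := l + n) hKsub ?_
        have hll : Order.IsSuccLimit (Ordinal.lift.{u+1} l) := Ordinal.isSuccLimit_lift.mpr hl
        have hb1 : OtypeAux.t (insert δ₀ (H ∩ Set.Iio l)) + (Fn.card : Ordinal.{u+1}) <
            Ordinal.lift.{u+1} l := by
          have hi1 : OtypeAux.t (insert δ₀ (H ∩ Set.Iio l)) < Ordinal.lift.{u+1} l := by
            refine lt_of_le_of_lt (OtypeAux.t_insert_le _ _) ?_
            rw [Ordinal.add_one_eq_succ]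
            exact hll.succ_lt ht0
          exact OtypeAux.add_nat_lt_of_limit hll hi1 Fn.card
        calc OtypeAux.t K ≤ OtypeAux.t (insert δ₀ (H ∩ Set.Iio l)) + Fn.card :=
              OtypeAux.t_union_finset _ _
          _ < Ordinal.lift.{u+1} l := hb1
          _ ≤ Ordinal.lift.{u+1} (l + n) := Ordinal.lift_le.mpr hlle
      · rw [Set.eq_univ_iff_forall]
        intro x
        have hx : x ∈ ⋃ i ∈ H, V i := hHcov ▸ Set.mem_univ x
        simp only [Set.mem_iUnion, exists_prop] at hx
        obtain ⟨i, hiH, hxi⟩ := hx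
        simp only [Set.mem_iUnion, exists_prop]
        by_cases hi : i < l + n
        · simp only [hV, if_pos hi] at hxi
          by_cases hil : i < l
          · exact ⟨i, Or.inl (Or.inr ⟨hiH, hil⟩), hxi.1⟩
          · obtain ⟨i', hi'n, rfl⟩ := hdec i hi hil
            refine ⟨l + i', Or.inr ?_, hxi.1⟩
            simp only [hFn, Finset.coe_image, Set.mem_image, Finset.mem_coe, Finset.mem_range]
            exact ⟨i', hi'n, rfl⟩
        · simp only [hV, if_neg hi] at hxi
          exact ⟨δ₀, Or.inl (Or.inl rfl), hxi⟩
    -- Case B1 : all sets with index < l are empty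
    · push_neg at hY
      have hempty : ∀ δ, δ < l → O δ = ∅ := hY
      set Fn : Finset Ordinal.{u} := (Finset.range n).image (fun i : ℕ => l + i) with hFn
      set K : Set Ordinal.{u} := (∅ : Set Ordinal.{u}) ∪ ↑Fn with hK
      have hKsub : K ⊆ Set.Iio (l + (n : Ordinal.{u})) := by
        rintro δ (hδ | hδ)
        · exact absurd hδ (Set.notMem_empty δ)
        · simp only [hFn, Finset.coe_image, Set.mem_image, Finset.mem_coe,
            Finset.mem_range] at hδ
          obtain ⟨i, hin, rfl⟩ := hδ
          exact Set.mem_Iio.mpr (hln i hin)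
      refine ⟨K, hKsub, ?_, ?_⟩
      · refine otype_lt_of_t_lt (β := l + n) hKsub ?_
        calc OtypeAux.t K ≤ OtypeAux.t (∅ : Set Ordinal.{u}) + Fn.card :=
              OtypeAux.t_union_finset _ _
          _ = (Fn.card : Ordinal.{u+1}) := by rw [OtypeAux.t_empty, zero_add]
          _ < (ω : Ordinal.{u+1}) := Ordinal.nat_lt_omega0 _
          _ ≤ Ordinal.lift.{u+1} l := by
              have h5 : Ordinal.lift.{u+1} (ω : Ordinal.{u}) ≤ Ordinal.lift.{u+1} l :=
                Ordinal.lift_le.mpr hωl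
              rwa [Ordinal.lift_omega0] at h5
          _ ≤ Ordinal.lift.{u+1} (l + n) := Ordinal.lift_le.mpr hlle
      · rw [Set.eq_univ_iff_forall]
        intro x
        have hx : x ∈ ⋃ δ ∈ Set.Iio (l + (n : Ordinal.{u})), O δ := hcov ▸ Set.mem_univ x
        simp only [Set.mem_iUnion, Set.mem_Iio, exists_prop] at hx
        obtain ⟨δ, hδ, hxδ⟩ := hx
        simp only [Set.mem_iUnion, exists_prop]
        by_cases hδl : δ < l
        · rw [hempty δ hδl] at hxδ
          exact absurd hxδ (Set.notMem_empty x)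
        · obtain ⟨i, hin, rfl⟩ := hdec δ hδ hδl
          refine ⟨l + i, Or.inr ?_, hxδ⟩
          simp only [hFn, Finset.coe_image, Set.mem_image, Finset.mem_coe, Finset.mem_range]
          exact ⟨i, hin, rfl⟩

/-- Proposition 6.4(1): for a `T₁` pair `(X, τ)` and an infinite ordinal `α`,
`[α, α]`-compactness is equivalent to `[α + 1, α + 1]`-compactness. -/
theorem ordCompact_succ_iff_of_t1 {X : Type*} (hX : Nonempty X)
    {τ : Set (Set X)} (hτ : τ.Nonempty) (hT1 : IsT1Fam τ)
    {α : Ordinal} (hα : ω ≤ α) :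
    OrdCompact α α X τ ↔ OrdCompact (α + 1) (α + 1) X τ := by
  constructor
  · exact fun h => forward hα h
  · exact fun h => backward hX hT1 hα h
end
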